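/- arXiv:1511.06966 — 9 statements merged into one kernel-verified Lean document; each statement's English description precedes it below -/
import Mathlib

section
/- Let F be a field, V a finite-dimensional F-vector space, and L : V → V a linear map with invariant factor decomposition α₁(x), ..., α_t(x) (so V ≅ ⨁ᵢ F[x]/(αᵢ(x)) as F[x]-modules via L). For every positive integer r, the set of fixed points of L^r is a vector subspace of V of dimension ∑ᵢ deg(gcd(x^r − 1, αᵢ(x))). -/
open Polynomial

section Aux

variable {F : Type*} [Field F]

private lemma auxFD (β : Polynomial F) (hβ : β ≠ 0) :
    FiniteDimensional F (Polynomial F ⧸ Ideal.span {β}) :=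
  (AdjoinRoot.powerBasis hβ).finite

private lemma auxFinrankQuot (β : Polynomial F) (hβ : β ≠ 0) :
    Module.finrank F (Polynomial F ⧸ Ideal.span {β}) = β.natDegree :=
  (AdjoinRoot.powerBasis hβ).finrank

private lemma auxDvdGen (p α q g u v : Polynomial F) (hg0 : g ≠ 0)
    (hgp : g ∣ p) (hgα : g ∣ α) (hb : g = p * u + α * v) :
    α ∣ p * q ↔ α / g ∣ q := by
  have ha : g * (α / g) = α := EuclideanDomain.mul_div_cancel' hg0 hgα
  constructor
  · rintro hd
    have h1 : α ∣ g * q := by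
      have h2 : g * q = (p * q) * u + α * (v * q) := by rw [hb]; ring
      rw [h2]
      exact dvd_add (hd.mul_right _) (Dvd.intro _ rfl)
    exact (mul_dvd_mul_iff_left hg0).mp (by rw [ha]; exact h1)
  · rintro ⟨q', rfl⟩
    obtain ⟨p', hp'⟩ := hgp
    have h3 : p * (α / g * q') = g * (α / g) * (p' * q') := by rw [hp']; ring
    rw [ha] at h3
    exact ⟨p' * q', h3⟩

open scoped Classical in
private lemma auxKey (p α : Polynomial F) (hα : α ≠ 0) :
    Module.finrank F (LinearMap.ker
      ((LinearMap.lsmul (Polynomial F) (Polynomial F ⧸ Ideal.span {α}) p).restrictScalars F)) =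
    (EuclideanDomain.gcd p α).natDegree := by
  have hg0 : EuclideanDomain.gcd p α ≠ 0 := fun h =>
    hα (EuclideanDomain.gcd_eq_zero_iff.mp h).2
  set g := EuclideanDomain.gcd p α with hgdef
  set a := α / g with hadef
  have ha : g * a = α := EuclideanDomain.mul_div_cancel' hg0 (EuclideanDomain.gcd_dvd_right p α)
  have ha0 : a ≠ 0 := by intro h0; rw [h0, mul_zero] at ha; exact hα ha.symm
  have hle : Ideal.span {α} ≤ Submodule.comap
      (LinearMap.id : Polynomial F →ₗ[Polynomial F] Polynomial F) (Ideal.span {a}) := by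
    rw [Submodule.comap_id]
    exact Ideal.span_singleton_le_span_singleton.mpr ⟨g, by rw [← ha]; ring⟩
  set π : (Polynomial F ⧸ Ideal.span {α}) →ₗ[Polynomial F] (Polynomial F ⧸ Ideal.span {a}) :=
    Submodule.mapQ _ _ LinearMap.id hle with hπ
  have hker : LinearMap.ker
      ((LinearMap.lsmul (Polynomial F) (Polynomial F ⧸ Ideal.span {α}) p).restrictScalars F)
      = LinearMap.ker (π.restrictScalars F) := by
    ext x
    obtain ⟨q, rfl⟩ := Submodule.mkQ_surjective _ x
    simp only [LinearMap.mem_ker, LinearMap.coe_restrictScalars, LinearMap.lsmul_apply, hπ,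
      Submodule.mapQ_apply, LinearMap.id_coe, id_eq, Submodule.mkQ_apply]
    rw [← Submodule.Quotient.mk_smul, smul_eq_mul, Submodule.Quotient.mk_eq_zero,
      Submodule.Quotient.mk_eq_zero, Ideal.mem_span_singleton, Ideal.mem_span_singleton]
    exact auxDvdGen p α q g _ _ hg0 (EuclideanDomain.gcd_dvd_left p α)
      (EuclideanDomain.gcd_dvd_right p α) (EuclideanDomain.gcd_eq_gcd_ab p α)
  rw [hker]
  haveI := auxFD α hα
  haveI := auxFD a ha0
  have hsurj : Function.Surjective (π.restrictScalars F) := by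
    intro y
    obtain ⟨q, rfl⟩ := Submodule.mkQ_surjective _ y
    exact ⟨Submodule.mkQ _ q, by
      rw [Submodule.mkQ_apply, LinearMap.coe_restrictScalars, hπ, Submodule.mapQ_apply]
      rfl⟩
  have hrn := LinearMap.finrank_range_add_finrank_ker (π.restrictScalars F)
  rw [LinearMap.range_eq_top.mpr hsurj, finrank_top, auxFinrankQuot α hα,
    auxFinrankQuot a ha0] at hrn
  have hdeg : α.natDegree = g.natDegree + a.natDegree := by
    rw [← ha]; exact Polynomial.natDegree_mul hg0 ha0
  omega

/-- Transfer the kernel of scalar multiplication across an `F[X]`-linear equivalence. -/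
private lemma auxTransfer {M N : Type*} [AddCommMonoid M] [AddCommMonoid N]
    [Module (Polynomial F) M] [Module (Polynomial F) N] [Module F M] [Module F N]
    [IsScalarTower F (Polynomial F) M] [IsScalarTower F (Polynomial F) N]
    (e : M ≃ₗ[Polynomial F] N) (p : Polynomial F) :
    Module.finrank F (LinearMap.ker ((LinearMap.lsmul (Polynomial F) M p).restrictScalars F)) =
    Module.finrank F (LinearMap.ker ((LinearMap.lsmul (Polynomial F) N p).restrictScalars F)) := by
  apply LinearEquiv.finrank_eq
  refine ((e.restrictScalars F).submoduleMap _).trans (LinearEquiv.ofEq _ _ ?_)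
  ext x
  rw [Submodule.mem_map_equiv]
  simp only [LinearMap.mem_ker, LinearMap.coe_restrictScalars, LinearMap.lsmul_apply]
  show p • ((e.restrictScalars F).symm x : M) = 0 ↔ p • x = 0
  have h1 : ((e.restrictScalars F).symm x : M) = e.symm x := rfl
  rw [h1, ← map_smul e.symm p x, LinearEquiv.map_eq_zero_iff]

private def piSubmoduleEquiv {R : Type*} [Semiring R] {ι : Type*} {M : ι → Type*}
    [∀ i, AddCommMonoid (M i)] [∀ i, Module R (M i)] (p : ∀ i, Submodule R (M i)) :
    (Submodule.pi Set.univ p) ≃ₗ[R] (∀ i, p i) where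
  toFun x i := ⟨x.1 i, x.2 i (Set.mem_univ i)⟩
  map_add' _ _ := rfl
  map_smul' _ _ := rfl
  invFun v := ⟨fun i => v i, fun i _ => (v i).2⟩
  left_inv _ := rfl
  right_inv _ := rfl

end Aux

/- If `L : V → V` has invariant factor decomposition `α₁ ∣ ⋯ ∣ α_t`
(i.e. `V ≅ ⨁ᵢ F[x]/(αᵢ)` as `F[x]`-modules via `L`), then for every `r ≥ 1`
the fixed space of `L^r` has dimension `∑ᵢ deg gcd(x^r − 1, αᵢ)`. -/
set_option maxHeartbeats 1000000 in
open scoped Classical in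
theorem stmt1 {F : Type*} [Field F] {V : Type*} [AddCommGroup V] [Module F V]
    [FiniteDimensional F V] (L : V →ₗ[F] V) (t : ℕ) (α : Fin t → Polynomial F)
    (hmonic : ∀ i, (α i).Monic)
    (hdvd : ∀ i j : Fin t, i ≤ j → α i ∣ α j)
    (e : Module.AEval' L ≃ₗ[Polynomial F]
      DirectSum (Fin t) (fun i => Polynomial F ⧸ Ideal.span {α i}))
    (r : ℕ) (hr : 0 < r) :
    Module.finrank F (LinearMap.ker (L ^ r - LinearMap.id)) =
      ∑ i : Fin t, (EuclideanDomain.gcd (X ^ r - 1) (α i)).natDegree := by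
  set p : Polynomial F := X ^ r - 1 with hpdef
  have hα0 : ∀ i, α i ≠ 0 := fun i => (hmonic i).ne_zero
  -- Step A: pass to scalar multiplication by `p` on `AEval' L`.
  have stepA : Module.finrank F (LinearMap.ker (L ^ r - LinearMap.id)) =
      Module.finrank F (LinearMap.ker
        ((LinearMap.lsmul (Polynomial F) (Module.AEval' L) p).restrictScalars F)) := by
    have haeval : aeval L p = (L ^ r - LinearMap.id : V →ₗ[F] V) := by
      rw [hpdef, map_sub, map_pow, aeval_X, map_one]
      rfl
    have h2 : ∀ m : Module.AEval' L, p • m = 0 ↔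
        (L ^ r - LinearMap.id : V →ₗ[F] V) ((Module.AEval'.of L).symm m) = 0 := by
      intro m
      rw [← LinearEquiv.map_eq_zero_iff (Module.AEval'.of L).symm, Module.AEval.of_symm_smul,
        haeval]
      exact Iff.rfl
    apply LinearEquiv.finrank_eq
    refine ((Module.AEval'.of L).submoduleMap _).trans (LinearEquiv.ofEq _ _ ?_)
    ext m
    rw [Submodule.mem_map_equiv]
    show (L ^ r - LinearMap.id : V →ₗ[F] V) ((Module.AEval'.of L).symm m) = 0 ↔ _
    rw [← h2 m]
    rfl
  rw [stepA]
  -- Step B: transfer across `e` to the direct sum.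
  rw [auxTransfer e p]
  -- Step C: transfer across the equivalence with the product.
  rw [auxTransfer (DirectSum.linearEquivFunOnFintype (Polynomial F) (Fin t)
    (fun i => Polynomial F ⧸ Ideal.span {α i})) p]
  -- Step D: decompose the kernel as a product.
  haveI : ∀ i, FiniteDimensional F (Polynomial F ⧸ Ideal.span {α i}) :=
    fun i => auxFD (α i) (hα0 i)
  have hker : LinearMap.ker ((LinearMap.lsmul (Polynomial F)
        (∀ i, Polynomial F ⧸ Ideal.span {α i}) p).restrictScalars F)
      = Submodule.pi Set.univ (fun i => LinearMap.ker
          ((LinearMap.lsmul (Polynomial F) (Polynomial F ⧸ Ideal.span {α i}) p).restrictScalars F)) := by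
    ext x
    simp only [LinearMap.mem_ker, LinearMap.coe_restrictScalars, LinearMap.lsmul_apply,
      Submodule.mem_pi, Set.mem_univ, forall_const]
    rw [funext_iff]
    simp [Pi.smul_apply]
  haveI : ∀ i, Module.Free F (LinearMap.ker
      ((LinearMap.lsmul (Polynomial F) (Polynomial F ⧸ Ideal.span {α i}) p).restrictScalars F)) :=
    fun i => Module.Free.of_divisionRing F _
  rw [hker, LinearEquiv.finrank_eq (piSubmoduleEquiv _), Module.finrank_pi_fintype]
  exact Finset.sum_congr rfl fun i _ => auxKey p (α i) (hα0 i)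
end

section
/- Let n ≥ 3 and let L_n : 𝔽₂ⁿ → 𝔽₂ⁿ be given by L_n(y₁,...,y_n) = (y₁+y₂+y_n, y₁+y₃+y_n, ..., y₁+y_{n−1}+y_n, y₁, y₂). Define ι_n : 𝔽₂ⁿ → 𝔽₂^{2n−2} by ι_n(a₁,...,a_n) = (a₁,...,a_n, a₁+a₂+a_n, a₁+a₃+a_n, ..., a₁+a_{n−1}+a_n), and define the shift σ : 𝔽₂^{2n−2} → 𝔽₂^{2n−2} by σ(a₁,...,a_{2n−2}) = (a_{n+1},...,a_{2n−2}, a₁,...,a_n). Then ι_n is an injective 𝔽₂-linear map satisfying ι_n ∘ L_n = σ ∘ ι_n. -/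
/-- The SDS map `[C_n, parity₃, id]` as an `𝔽₂`-linear map on `𝔽₂ⁿ` (`n ≥ 3`). -/
def Lmap (n : ℕ) (hn : 3 ≤ n) : (Fin n → ZMod 2) →ₗ[ZMod 2] (Fin n → ZMod 2) where
  toFun y i :=
    if h : (i : ℕ) < n - 2 then
      y ⟨0, by omega⟩ + y ⟨(i : ℕ) + 1, by omega⟩ + y ⟨n - 1, by omega⟩
    else if (i : ℕ) = n - 2 then y ⟨0, by omega⟩ else y ⟨1, by omega⟩
  map_add' x y := by
    funext i; simp only [Pi.add_apply]; split_ifs <;> ring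
  map_smul' c x := by
    funext i; simp only [Pi.smul_apply, smul_eq_mul, RingHom.id_apply]; split_ifs <;> ring

/-- The map `ι_n : 𝔽₂ⁿ → 𝔽₂^{2n−2}`. -/
def iota (n : ℕ) (hn : 3 ≤ n) : (Fin n → ZMod 2) →ₗ[ZMod 2] (Fin (2 * n - 2) → ZMod 2) where
  toFun a j :=
    if h : (j : ℕ) < n then a ⟨(j : ℕ), h⟩
    else a ⟨0, by omega⟩ + a ⟨(j : ℕ) - n + 1, by have := j.isLt; omega⟩ + a ⟨n - 1, by omega⟩
  map_add' x y := by
    funext j; simp only [Pi.add_apply]; split_ifs <;> ring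
  map_smul' c x := by
    funext j; simp only [Pi.smul_apply, smul_eq_mul, RingHom.id_apply]; split_ifs <;> ring

/-- The shift map `σ` on `𝔽₂^{2n−2}`, sending `(a₁,…,a_{2n−2})` to
`(a_{n+1},…,a_{2n−2},a₁,…,a_n)`. -/
def shiftMap (n : ℕ) (a : Fin (2 * n - 2) → ZMod 2) : Fin (2 * n - 2) → ZMod 2 :=
  fun j => a ⟨((j : ℕ) + n) % (2 * n - 2), Nat.mod_lt _ j.pos⟩

lemma aux_eq {n : ℕ} (a : Fin n → ZMod 2) {x y : ℕ} (hx : x < n) (hy : y < n) (h : x = y) :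
    a ⟨x, hx⟩ = a ⟨y, hy⟩ := by subst h; rfl

/-- `ι_n` is an injective `𝔽₂`-linear map with `ι_n ∘ L_n = σ ∘ ι_n`. -/
theorem stmt4 (n : ℕ) (hn : 3 ≤ n) :
    Function.Injective (iota n hn) ∧
      ∀ a : Fin n → ZMod 2, iota n hn (Lmap n hn a) = shiftMap n (iota n hn a) := by
  constructor
  · intro a b h
    funext i
    have hi : (i : ℕ) < 2 * n - 2 := by have := i.isLt; omega
    have := congrFun h ⟨i, hi⟩
    simpa [iota, i.isLt] using this
  · intro a
    funext j
    have hj := j.isLt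
    simp only [iota, Lmap, shiftMap, LinearMap.coe_mk, AddHom.coe_mk]
    by_cases h1 : (j : ℕ) < n
    · rw [dif_pos h1]
      by_cases h2 : (j : ℕ) < n - 2
      · rw [dif_pos h2]
        have hm : ((j : ℕ) + n) % (2 * n - 2) = (j : ℕ) + n := Nat.mod_eq_of_lt (by omega)
        rw [dif_neg (by rw [hm]; omega)]
        simp only [hm]
        refine congrArg₂ (· + ·) (congrArg₂ (· + ·) rfl ?_) rfl
        exact aux_eq a _ _ (by omega)
      · by_cases h3 : (j : ℕ) = n - 2
        · rw [dif_neg h2, if_pos h3]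
          have hm : ((j : ℕ) + n) % (2 * n - 2) = 0 := by
            have he : (j : ℕ) + n = 2 * n - 2 := by omega
            rw [he, Nat.mod_self]
          rw [dif_pos (by rw [hm]; omega)]
          exact aux_eq a _ _ (by rw [hm])
        · rw [dif_neg h2, if_neg h3]
          have hj1 : (j : ℕ) = n - 1 := by omega
          have hm : ((j : ℕ) + n) % (2 * n - 2) = 1 := by
            have he : (j : ℕ) + n = (2 * n - 2) * 1 + 1 := by omega
            rw [he, Nat.mul_add_mod, Nat.mod_eq_of_lt (by omega)]
          rw [dif_pos (by rw [hm]; omega)]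
          exact aux_eq a _ _ (by rw [hm])
    · rw [dif_neg h1]
      have hm : ((j : ℕ) + n) % (2 * n - 2) = (j : ℕ) + n - (2 * n - 2) := by
        rw [Nat.mod_eq_sub_mod (by omega), Nat.mod_eq_of_lt (by omega)]
      -- indices for L a
      have hlt0 : (0 : ℕ) < n - 2 := by omega
      rw [dif_pos hlt0]
      have hne : ¬ ((n - 1 : ℕ) < n - 2) := by omega
      have hne2 : (n - 1 : ℕ) ≠ n - 2 := by omega
      rw [dif_neg hne, if_neg hne2]
      by_cases h4 : (j : ℕ) - n + 1 < n - 2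
      · rw [dif_pos h4]
        rw [dif_pos (show ((j:ℕ)+n) % (2*n-2) < n by omega)]
        have : a ⟨((j : ℕ) + n) % (2 * n - 2), by omega⟩ = a ⟨(j:ℕ) - n + 1 + 1, by omega⟩ :=
          aux_eq a _ _ (by omega)
        rw [this]
        have key : ∀ p q r s : ZMod 2, p + q + r + (p + s + r) + q = s := by decide
        exact key _ _ _ _
      · have h5 : (j : ℕ) - n + 1 = n - 2 := by omega
        rw [dif_neg h4, if_pos h5]
        rw [dif_pos (show ((j:ℕ)+n) % (2*n-2) < n by omega)]
        have : a ⟨((j : ℕ) + n) % (2 * n - 2), by omega⟩ = a ⟨n - 1, by omega⟩ :=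
          aux_eq a _ _ (by omega)
        rw [this]
        have key : ∀ p q r : ZMod 2, p + q + r + p + q = r := by decide
        exact key _ _ _
end

section
/- Let n ≥ 3 and let L_n : 𝔽₂ⁿ → 𝔽₂ⁿ be defined by L_n(y₁,...,y_n) = (y₁+y₂+y_n, y₁+y₃+y_n, ..., y₁+y_{n−1}+y_n, y₁, y₂). If L_n has a periodic point of period r, then r divides 2n−2; moreover, if n is even, then r divides n−1. -/
/-- The "universal row" function. -/
def gfun (n : ℕ) (hn : 3 ≤ n) (m : ℕ) (y : Fin n → ZMod 2) : ZMod 2 :=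
  if h : m % (2 * n - 2) < n then y ⟨m % (2 * n - 2), h⟩
  else
    y ⟨0, by omega⟩ +
      y ⟨m % (2 * n - 2) - (n - 1), by
        have := Nat.mod_lt m (show 0 < 2 * n - 2 by omega); omega⟩ +
      y ⟨n - 1, by omega⟩

lemma gfun_L (n : ℕ) (hn : 3 ≤ n) (m : ℕ) (y : Fin n → ZMod 2) :
    gfun n hn m (Lmap n hn y) = gfun n hn (m + n) y := by
  have h2 : (2 : ZMod 2) = 0 := rfl
  set M := 2 * n - 2 with hM
  have hM0 : 0 < M := by omega
  have hrlt : m % M < M := Nat.mod_lt m hM0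
  set r := m % M with hr
  have hmn : (m + n) % M = (r + n) % M := by
    rw [hr]; exact (Nat.mod_add_mod m M n).symm
  rcases lt_or_ge r (n - 2) with hc | hc
  · -- r < n - 2
    have hv : (m + n) % M = r + n := by rw [hmn, Nat.mod_eq_of_lt (by omega)]
    simp only [gfun, ← hM, ← hr, hv, Lmap, LinearMap.coe_mk, AddHom.coe_mk]
    rw [dif_pos (show r < n by omega), dif_neg (show ¬ r + n < n by omega)]
    rw [dif_pos (show r < n - 2 from hc)]
    have eA : (⟨r + n - (n - 1), by omega⟩ : Fin n) = ⟨r + 1, by omega⟩ := by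
      ext; simp; omega
    rw [eA]
  · rcases lt_or_ge r n with hc2 | hc2
    · rcases Nat.lt_or_ge r (n - 1) with hc3 | hc3
      · -- r = n - 2
        have hre : r = n - 2 := by omega
        have hv : (m + n) % M = 0 := by
          rw [hmn, hre, show n - 2 + n = M + 0 by omega, Nat.add_mod_left,
            Nat.mod_eq_of_lt hM0]
        simp only [gfun, ← hM, ← hr, hv, Lmap, LinearMap.coe_mk, AddHom.coe_mk]
        rw [dif_pos (show r < n from hc2), dif_pos (show 0 < n by omega)]
        rw [dif_neg (show ¬ r < n - 2 by omega), if_pos hre]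
      · -- r = n - 1
        have hre : r = n - 1 := by omega
        have hv : (m + n) % M = 1 := by
          rw [hmn, hre, show n - 1 + n = M + 1 by omega, Nat.add_mod_left,
            Nat.mod_eq_of_lt (by omega)]
        simp only [gfun, ← hM, ← hr, hv, Lmap, LinearMap.coe_mk, AddHom.coe_mk]
        rw [dif_pos (show r < n from hc2), dif_pos (show 1 < n by omega)]
        rw [dif_neg (show ¬ r < n - 2 by omega), if_neg (show ¬ r = n - 2 by omega)]
    · -- n ≤ r ≤ 2n - 3; set t = r - (n-1), 1 ≤ t ≤ n - 2
      have ht1 : 1 ≤ r - (n - 1) := by omega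
      have ht2 : r - (n - 1) ≤ n - 2 := by omega
      have hv : (m + n) % M = r - (n - 1) + 1 := by
        rw [hmn, show r + n = M + (r - (n - 1) + 1) by omega, Nat.add_mod_left,
          Nat.mod_eq_of_lt (by omega)]
      simp only [gfun, ← hM, ← hr, hv, Lmap, LinearMap.coe_mk, AddHom.coe_mk]
      rw [dif_neg (show ¬ r < n by omega), dif_pos (show r - (n - 1) + 1 < n by omega)]
      rw [dif_pos (show (0 : ℕ) < n - 2 by omega)]
      rw [dif_neg (show ¬ n - 1 < n - 2 by omega), if_neg (show ¬ n - 1 = n - 2 by omega)]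
      have e0 : (⟨(0 : ℕ) + 1, by omega⟩ : Fin n) = ⟨1, by omega⟩ := rfl
      rcases lt_or_ge (r - (n - 1)) (n - 2) with hc4 | hc4
      · -- t < n - 2
        rw [dif_pos (show r - (n - 1) < n - 2 from hc4)]
        have eB : (⟨r - (n - 1) + 1, by omega⟩ : Fin n) = ⟨r - (n - 1) + 1, by omega⟩ := rfl
        rw [e0]
        linear_combination (y ⟨0, by omega⟩ + y ⟨1, by omega⟩ + y ⟨n - 1, by omega⟩) * h2
      · -- t = n - 2
        have hte : r - (n - 1) = n - 2 := by omega
        rw [dif_neg (show ¬ r - (n - 1) < n - 2 by omega), if_pos hte]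
        rw [e0]
        have et : (⟨r - (n - 1) + 1, by omega⟩ : Fin n) = ⟨n - 1, by omega⟩ := by
          ext; simp; omega
        rw [et]
        linear_combination (y ⟨0, by omega⟩ + y ⟨1, by omega⟩) * h2

lemma iter_eq (n : ℕ) (hn : 3 ≤ n) (k : ℕ) (y : Fin n → ZMod 2) (i : Fin n) :
    (Lmap n hn)^[k] y i = gfun n hn ((i : ℕ) + k * n) y := by
  induction k generalizing y with
  | zero =>
    simp only [Function.iterate_zero, id_eq, gfun, Nat.zero_mul, Nat.add_zero]
    have hi : (i : ℕ) % (2 * n - 2) = i := Nat.mod_eq_of_lt (by omega)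
    rw [dif_pos (by rw [hi]; omega)]
    congr 1; ext; simp [hi]
  | succ k ih =>
    rw [Function.iterate_succ, Function.comp_apply, ih, gfun_L]
    congr 1; ring

/-- If `L_n` has a periodic point of (exact) period `r`, then `r ∣ 2n−2`;
moreover if `n` is even then `r ∣ n−1`. -/
theorem stmt5 (n : ℕ) (hn : 3 ≤ n) (r : ℕ) (hr : 0 < r)
    (h : ∃ v : Fin n → ZMod 2, Function.minimalPeriod (Lmap n hn) v = r) :
    r ∣ 2 * n - 2 ∧ (Even n → r ∣ n - 1) := by
  obtain ⟨v, hv⟩ := h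
  have key : ∀ (k : ℕ), (2 * n - 2) ∣ k * n → (Lmap n hn)^[k] v = v := by
    intro k hk
    funext i
    rw [iter_eq n hn k v i]
    obtain ⟨c, hc⟩ := hk
    simp only [gfun, hc, Nat.add_mul_mod_self_left]
    rw [dif_pos (by rw [Nat.mod_eq_of_lt (by omega)]; omega)]
    congr 1; ext; simp [Nat.mod_eq_of_lt (show (i : ℕ) < 2 * n - 2 by omega)]
  constructor
  · have hp : Function.IsPeriodicPt (Lmap n hn) (2 * n - 2) v :=
      key (2 * n - 2) ⟨n, rfl⟩
    rw [← hv]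
    exact hp.minimalPeriod_dvd
  · intro hev
    obtain ⟨m, hm⟩ := hev
    have hp : Function.IsPeriodicPt (Lmap n hn) (n - 1) v := by
      apply key
      refine ⟨m, ?_⟩
      subst hm
      obtain ⟨k, rfl⟩ : ∃ k, m = k + 1 := ⟨m - 1, by omega⟩
      have e1 : (k + 1) + (k + 1) - 1 = 2 * k + 1 := by omega
      have e2 : 2 * ((k + 1) + (k + 1)) - 2 = 4 * k + 2 := by omega
      rw [e1, e2]; ring
    rw [← hv]
    exact hp.minimalPeriod_dvd
end

section
/- Let n ≥ 3 be even and let L_n : 𝔽₂ⁿ → 𝔽₂ⁿ be the linear map L_n(y₁,...,y_n) = (y₁+y₂+y_n, y₁+y₃+y_n, ..., y₁+y_{n−1}+y_n, y₁, y₂). Then the minimal polynomial of L_n is x^{n−1} − 1, and the invariant factor decomposition of L_n is (x+1), (x^{n−1} − 1). -/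
open Polynomial

/-- the alternating vector (1,0,1,0,...), fixed by `Lmap` when `n` is even -/
def uvec (n : ℕ) : Fin n → ZMod 2 := fun i => if (i : ℕ) % 2 = 0 then 1 else 0

/-- the cycle of vectors `e_{n-2}, e_{n-3}, ..., e_1, e_0 + e_{n-1}` permuted by `Lmap` -/
def cvec (n k : ℕ) : Fin n → ZMod 2 := fun i =>
  if k % (n - 1) = n - 2 then (if (i : ℕ) = 0 ∨ (i : ℕ) = n - 1 then 1 else 0)
  else if (i : ℕ) = n - 2 - k % (n - 1) then 1 else 0

/-- standard basis vector -/
def esingle (n j : ℕ) : Fin n → ZMod 2 := fun i => if (i : ℕ) = j then 1 else 0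

/-- partial sums `e_0 + e_2 + ... + e_{n-2-2m}` -/
def tvec (n m : ℕ) : Fin n → ZMod 2 := fun i =>
  if (i : ℕ) % 2 = 0 ∧ (i : ℕ) + 2 * m ≤ n - 2 then 1 else 0

lemma uvec_fixed (n : ℕ) (hn : 3 ≤ n) (hne : n % 2 = 0) : Lmap n hn (uvec n) = uvec n := by
  funext i
  have hi := i.isLt
  simp only [Lmap, LinearMap.coe_mk, AddHom.coe_mk, uvec]
  split_ifs <;> first | rfl | decide | omega | contradiction | (exfalso; omega)

lemma cvec_step (n : ℕ) (hn : 3 ≤ n) (k : ℕ) :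
    Lmap n hn (cvec n k) = cvec n (k + 1) := by
  have hn1 : 0 < n - 1 := by omega
  have hmlt : k % (n - 1) < n - 1 := Nat.mod_lt _ hn1
  rcases eq_or_ne (k % (n - 1)) (n - 2) with h | h
  · have h2 : (k + 1) % (n - 1) = (k % (n - 1) + 1) % (n - 1) := by
      conv_lhs => rw [Nat.add_mod, Nat.mod_eq_of_lt (show 1 < n - 1 by omega)]
    have h' : (k + 1) % (n - 1) = 0 := by
      rw [h2, h, show n - 2 + 1 = n - 1 by omega, Nat.mod_self]
    funext i
    have hi := i.isLt
    simp only [Lmap, LinearMap.coe_mk, AddHom.coe_mk, cvec, h, h']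
    split_ifs <;> (try simp only [false_or, true_or, or_false, or_true, not_or, not_true,
      not_false_iff] at *) <;> first | rfl | decide | omega | contradiction | (exfalso; omega)
  · have h2 : (k + 1) % (n - 1) = (k % (n - 1) + 1) % (n - 1) := by
      conv_lhs => rw [Nat.add_mod, Nat.mod_eq_of_lt (show 1 < n - 1 by omega)]
    have h' : (k + 1) % (n - 1) = k % (n - 1) + 1 := by
      rw [h2, Nat.mod_eq_of_lt (by omega)]
    funext i
    have hi := i.isLt
    simp only [Lmap, LinearMap.coe_mk, AddHom.coe_mk, cvec, h', if_neg h]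
    split_ifs <;> (try simp only [false_or, true_or, or_false, or_true, not_or, not_true,
      not_false_iff] at *) <;> first | rfl | decide | omega | contradiction | (exfalso; omega)

lemma cvec_periodic (n k : ℕ) : cvec n (k + (n - 1)) = cvec n k := by
  funext i
  simp only [cvec]
  rw [Nat.add_mod_right]

lemma cvec_iter (n : ℕ) (hn : 3 ≤ n) (m k : ℕ) :
    ((Lmap n hn) ^ m) (cvec n k) = cvec n (k + m) := by
  induction m with
  | zero => rfl
  | succ m ih =>
    rw [pow_succ', Module.End.mul_apply, ih, cvec_step]
    rfl

lemma uvec_iter (n : ℕ) (hn : 3 ≤ n) (hne : n % 2 = 0) (m : ℕ) :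
    ((Lmap n hn) ^ m) (uvec n) = uvec n := by
  induction m with
  | zero => rfl
  | succ m ih => rw [pow_succ', Module.End.mul_apply, ih, uvec_fixed n hn hne]

lemma esingle_eq_cvec (n j : ℕ) (hn : 3 ≤ n) (h1 : 1 ≤ j) (h2 : j ≤ n - 2) :
    esingle n j = cvec n (n - 2 - j) := by
  have hmod : (n - 2 - j) % (n - 1) = n - 2 - j := Nat.mod_eq_of_lt (by omega)
  funext i
  simp only [esingle, cvec, hmod]
  split_ifs <;> first | rfl | decide | omega | contradiction | (exfalso; omega)

lemma tvec_zero (n : ℕ) (hn : 3 ≤ n) (hne : n % 2 = 0) : tvec n 0 = uvec n := by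
  funext i
  have hi := i.isLt
  simp only [tvec, uvec]
  split_ifs <;> first | rfl | decide | omega | contradiction | (exfalso; omega)

lemma tvec_succ (n m : ℕ) (hn : 3 ≤ n) (hne : n % 2 = 0) (hm : 2 * m ≤ n - 4) :
    tvec n (m + 1) = tvec n m + cvec n (2 * m) := by
  have hmod : (2 * m) % (n - 1) = 2 * m := Nat.mod_eq_of_lt (by omega)
  funext i
  have hi := i.isLt
  simp only [tvec, cvec, hmod, Pi.add_apply]
  split_ifs <;> first | rfl | decide | omega | contradiction | (exfalso; omega)

lemma tvec_last (n : ℕ) (hn : 3 ≤ n) (hne : n % 2 = 0) :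
    tvec n ((n - 2) / 2) = esingle n 0 := by
  funext i
  have hi := i.isLt
  simp only [tvec, esingle]
  split_ifs <;> first | rfl | decide | omega | contradiction | (exfalso; omega)

lemma esingle_last (n : ℕ) (hn : 3 ≤ n) :
    esingle n (n - 1) = cvec n (n - 2) + esingle n 0 := by
  have hmod : (n - 2) % (n - 1) = n - 2 := Nat.mod_eq_of_lt (by omega)
  funext i
  have hi := i.isLt
  simp only [esingle, cvec, hmod, Pi.add_apply, if_pos rfl]
  split_ifs <;> (try simp only [false_or, true_or, or_false, or_true, not_or, not_true,
      not_false_iff] at *) <;> first | rfl | decide | omega | contradiction | (exfalso; omega)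

lemma basisFun_eq (n : ℕ) (j : Fin n) :
    (Pi.basisFun (ZMod 2) (Fin n)) j = esingle n (j : ℕ) := by
  funext i
  rw [Pi.basisFun_apply]
  rcases eq_or_ne i j with h | h
  · simp [esingle, h, Pi.single_apply]
  · have h' : (i : ℕ) ≠ (j : ℕ) := fun hh => h (Fin.ext hh)
    simp [esingle, h', Pi.single_apply, (Ne.symm h)]

lemma span_top (n : ℕ) (hn : 3 ≤ n) (hne : n % 2 = 0) :
    Submodule.span (ZMod 2) (insert (uvec n) (Set.range (cvec n))) = ⊤ := by
  set T := Submodule.span (ZMod 2) (insert (uvec n) (Set.range (cvec n))) with hT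
  have hu : uvec n ∈ T := Submodule.subset_span (Set.mem_insert _ _)
  have hc : ∀ k, cvec n k ∈ T := fun k =>
    Submodule.subset_span (Set.mem_insert_of_mem _ ⟨k, rfl⟩)
  have htv : ∀ m, 2 * m ≤ n - 2 → tvec n m ∈ T := by
    intro m
    induction m with
    | zero => intro _; rw [tvec_zero n hn hne]; exact hu
    | succ m ih =>
      intro h
      rw [tvec_succ n m hn hne (by omega)]
      exact T.add_mem (ih (by omega)) (hc _)
  have h0 : esingle n 0 ∈ T := by
    rw [← tvec_last n hn hne]; exact htv _ (by omega)
  have hj : ∀ j : Fin n, esingle n (j : ℕ) ∈ T := by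
    intro j
    have hjlt := j.isLt
    rcases Nat.eq_zero_or_pos (j : ℕ) with h | h
    · rw [h]; exact h0
    have : (j : ℕ) = n - 1 ∨ (j : ℕ) ≤ n - 2 := by omega
    rcases this with h2 | h2
    · rw [h2, esingle_last n hn]
      exact T.add_mem (hc _) h0
    · rw [esingle_eq_cvec n (j : ℕ) hn h h2]; exact hc _
  rw [eq_top_iff, ← (Pi.basisFun (ZMod 2) (Fin n)).span_eq]
  apply Submodule.span_le.mpr
  rintro x ⟨j, rfl⟩
  rw [basisFun_eq]
  exact hj j

lemma Lpow (n : ℕ) (hn : 3 ≤ n) (hne : n % 2 = 0) :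
    (Lmap n hn) ^ (n - 1) = (1 : Module.End (ZMod 2) (Fin n → ZMod 2)) := by
  apply LinearMap.ext_on (span_top n hn hne)
  intro x hx
  rcases Set.mem_insert_iff.mp hx with rfl | hx
  · rw [uvec_iter n hn hne, Module.End.one_apply]
  · obtain ⟨k, rfl⟩ := hx
    rw [cvec_iter n hn, cvec_periodic, Module.End.one_apply]

set_option maxHeartbeats 1000000 in
set_option synthInstance.maxHeartbeats 200000 in
/-- For even `n ≥ 3`, the minimal polynomial of `L_n` is `x^{n−1} − 1`,
and the invariant factor decomposition of `L_n` is `(x+1), (x^{n−1} − 1)`. -/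
theorem stmt6 (n : ℕ) (hn : 3 ≤ n) (hne : Even n) :
    minpoly (ZMod 2) (Lmap n hn) = X ^ (n - 1) - 1 ∧
    Nonempty (Module.AEval' (Lmap n hn) ≃ₗ[Polynomial (ZMod 2)]
      (Polynomial (ZMod 2) ⧸ Ideal.span {(X + 1 : Polynomial (ZMod 2))}) ×
        (Polynomial (ZMod 2) ⧸ Ideal.span {(X ^ (n - 1) - 1 : Polynomial (ZMod 2))})) := by
  have hne2 : n % 2 = 0 := Nat.even_iff.mp hne
  set R := ZMod 2
  set L := Lmap n hn with hL
  -- basic polynomial facts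
  have hmon1 : (X + 1 : R[X]).Monic := by
    simpa using monic_X_add_C (1 : R)
  have hmon2 : (X ^ (n - 1) - 1 : R[X]).Monic := by
    simpa using monic_X_pow_sub_C (1 : R) (show n - 1 ≠ 0 by omega)
  have haeval : aeval L (X ^ (n - 1) - 1 : R[X]) = 0 := by
    rw [map_sub, map_pow, aeval_X, map_one, Lpow n hn hne2, sub_self]
  -- the two special elements of AEval'
  set U₁ : Module.AEval' L := Module.AEval'.of L (uvec n) with hU₁
  set U₂ : Module.AEval' L := Module.AEval'.of L (cvec n 0) with hU₂
  have huu : uvec n + uvec n = 0 := by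
    funext i
    show uvec n i + uvec n i = 0
    exact CharTwo.add_self_eq_zero _
  have hkill1 : (X + 1 : R[X]) • U₁ = 0 := by
    rw [hU₁, ← Module.AEval.of_aeval_smul, map_add, aeval_X, map_one, Module.End.smul_def,
      LinearMap.add_apply, Module.End.one_apply, uvec_fixed n hn hne2, huu, map_zero]
  have hkill2 : (X ^ (n - 1) - 1 : R[X]) • U₂ = 0 := by
    rw [hU₂, ← Module.AEval.of_aeval_smul, haeval, zero_smul, map_zero]
  -- the map Φ
  set f₁ : R[X] →ₗ[R[X]] Module.AEval' L := LinearMap.toSpanSingleton R[X] _ U₁ with hf₁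
  set f₂ : R[X] →ₗ[R[X]] Module.AEval' L := LinearMap.toSpanSingleton R[X] _ U₂ with hf₂
  have hker1 : Ideal.span {(X + 1 : R[X])} ≤ LinearMap.ker f₁ := by
    rw [Ideal.span_le]
    intro p hp
    rw [Set.mem_singleton_iff] at hp
    subst hp
    simpa [hf₁, LinearMap.mem_ker, LinearMap.toSpanSingleton_apply] using hkill1
  have hker2 : Ideal.span {(X ^ (n - 1) - 1 : R[X])} ≤ LinearMap.ker f₂ := by
    rw [Ideal.span_le]
    intro p hp
    rw [Set.mem_singleton_iff] at hp
    subst hp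
    simpa [hf₂, LinearMap.mem_ker, LinearMap.toSpanSingleton_apply] using hkill2
  set Φ₁ := Submodule.liftQ _ f₁ hker1 with hΦ₁
  set Φ₂ := Submodule.liftQ _ f₂ hker2 with hΦ₂
  set Φ := Φ₁.coprod Φ₂ with hΦ
  -- surjectivity
  have hXk : ∀ k, (X ^ k : R[X]) • U₂ = Module.AEval'.of L (cvec n k) := by
    intro k
    rw [hU₂, ← Module.AEval.of_aeval_smul, map_pow, aeval_X]
    congr 1
    rw [Module.End.smul_def, cvec_iter n hn, Nat.zero_add]

  have hofmem : ∀ y : Fin n → ZMod 2, Module.AEval'.of L y ∈ LinearMap.range Φ := by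
    have hS : Submodule.span R (insert (uvec n) (Set.range (cvec n))) ≤
        Submodule.comap ((Module.AEval'.of L).toLinearMap)
          ((LinearMap.range Φ).restrictScalars R) := by
      apply Submodule.span_le.mpr
      intro x hx
      refine Submodule.mem_comap.mpr (Submodule.restrictScalars_mem _ _ _ |>.mpr ?_)
      rcases Set.mem_insert_iff.mp hx with rfl | ⟨k, rfl⟩
      · refine ⟨(Submodule.Quotient.mk 1, 0), ?_⟩
        rw [hΦ, LinearMap.coprod_apply, map_zero, add_zero, hΦ₁, Submodule.liftQ_apply,
          hf₁, LinearMap.toSpanSingleton_apply, one_smul]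
        rfl
      · refine ⟨(0, Submodule.Quotient.mk (X ^ k)), ?_⟩
        rw [hΦ, LinearMap.coprod_apply, map_zero, zero_add, hΦ₂, Submodule.liftQ_apply,
          hf₂, LinearMap.toSpanSingleton_apply, hXk]
        rfl
    intro y
    have hy : y ∈ Submodule.span R (insert (uvec n) (Set.range (cvec n))) := by
      rw [span_top n hn hne2]; trivial
    exact hS hy
  have hsurj : Function.Surjective Φ := by
    intro z
    have hz := hofmem ((Module.AEval'.of L).symm z)
    rw [LinearEquiv.apply_symm_apply] at hz
    exact hz
  -- cardinalities
  have hdeg1 : (X + 1 : R[X]).natDegree = 1 := by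
    simpa using natDegree_X_add_C (1 : R)
  have hdeg2 : (X ^ (n - 1) - 1 : R[X]).natDegree = n - 1 := by
    simpa using natDegree_X_pow_sub_C (n := n - 1) (r := (1 : R))
  have e₁ : (R[X] ⧸ Ideal.span {(X + 1 : R[X])}) ≃ (Fin 1 → R) := by
    have e := (AdjoinRoot.powerBasisAux' hmon1).equivFun.toEquiv
    rwa [hdeg1] at e
  have e₂ : (R[X] ⧸ Ideal.span {(X ^ (n - 1) - 1 : R[X])}) ≃ (Fin (n - 1) → R) := by
    have e := (AdjoinRoot.powerBasisAux' hmon2).equivFun.toEquiv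
    rwa [hdeg2] at e
  have hfin1 : Finite (R[X] ⧸ Ideal.span {(X + 1 : R[X])}) := Finite.of_equiv _ e₁.symm
  have hfin2 : Finite (R[X] ⧸ Ideal.span {(X ^ (n - 1) - 1 : R[X])}) := Finite.of_equiv _ e₂.symm
  have hcard : Nat.card ((R[X] ⧸ Ideal.span {(X + 1 : R[X])}) ×
      (R[X] ⧸ Ideal.span {(X ^ (n - 1) - 1 : R[X])})) ≤ Nat.card (Module.AEval' L) := by
    rw [Nat.card_prod, Nat.card_congr e₁, Nat.card_congr e₂,
      Nat.card_congr (Module.AEval'.of L).toEquiv.symm]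
    have c1 : Fintype.card (Fin 1 → R) = 2 ^ 1 := by
      rw [Fintype.card_fun, Fintype.card_fin, ZMod.card]
    have c2 : Fintype.card (Fin (n - 1) → R) = 2 ^ (n - 1) := by
      rw [Fintype.card_fun, Fintype.card_fin, ZMod.card]
    have c3 : Fintype.card (Fin n → ZMod 2) = 2 ^ n := by
      rw [Fintype.card_fun, Fintype.card_fin, ZMod.card]
    rw [Nat.card_eq_fintype_card, Nat.card_eq_fintype_card, Nat.card_eq_fintype_card, c1, c2, c3,
      show ((2 : ℕ) ^ 1 * 2 ^ (n - 1) = 2 ^ n) by rw [← pow_add]; congr 1; omega]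
  have hbij : Function.Bijective Φ := hsurj.bijective_of_nat_card_le hcard
  set e := LinearEquiv.ofBijective Φ hbij with he
  refine ⟨?_, ⟨e.symm⟩⟩
  -- minimal polynomial
  have hint : IsIntegral R L := ⟨X ^ (n - 1) - 1, hmon2, haeval⟩
  have h₁ : minpoly R L ∣ X ^ (n - 1) - 1 := minpoly.dvd R L haeval
  have h₂ : (X ^ (n - 1) - 1 : R[X]) ∣ minpoly R L := by
    have hzall : ∀ z : Module.AEval' L, (minpoly R L) • z = 0 := by
      intro z
      apply (Module.AEval'.of L).symm.injective
      rw [map_zero, Module.AEval.of_symm_smul, minpoly.aeval, zero_smul]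
    have h3 : (minpoly R L) • (((0 : R[X] ⧸ Ideal.span {(X + 1 : R[X])}),
        Submodule.Quotient.mk 1) :
        (R[X] ⧸ Ideal.span {(X + 1 : R[X])}) ×
          (R[X] ⧸ Ideal.span {(X ^ (n - 1) - 1 : R[X])})) = 0 := by
      apply e.injective
      rw [map_smul, map_zero]
      exact hzall _
    have h4 := congrArg Prod.snd h3
    simp only [Prod.smul_snd, Prod.snd_zero] at h4
    rw [← Submodule.Quotient.mk_smul, smul_eq_mul, mul_one] at h4
    rwa [Submodule.Quotient.mk_eq_zero, Ideal.mem_span_singleton] at h4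
  exact Polynomial.eq_of_monic_of_associated (minpoly.monic hint) hmon2
    (associated_of_dvd_dvd h₁ h₂)
end

section
/- Let n ≥ 3 be odd and let L_n : 𝔽₂ⁿ → 𝔽₂ⁿ be the linear map L_n(y₁,...,y_n) = (y₁+y₂+y_n, y₁+y₃+y_n, ..., y₁+y_{n−1}+y_n, y₁, y₂). Then the minimal polynomial of L_n equals its characteristic polynomial, namely (x+1)(x^{n−1} − 1); equivalently, L_n has a single invariant factor. -/
open Polynomial

namespace Stmt7Aux

/-- Coordinate formula for the iterates `L^k e₀`. -/
def W (n k i : ℕ) : ZMod 2 :=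
  if k = 0 then (if i = 0 then 1 else 0)
  else if k % 2 = 1 then (if i + k < n then 1 else 0)
  else (if n ≤ i + k then 1 else 0)

/-- The vectors `L^k e₀`. -/
def w (n k : ℕ) : Fin n → ZMod 2 := fun i => W n k (i : ℕ)

set_option maxHeartbeats 1000000 in
lemma step {n : ℕ} (hn : 3 ≤ n) {k : ℕ} (hk : k + 1 ≤ n - 1) :
    Lmap n hn (w n k) = w n (k + 1) := by
  funext i
  have hi := i.isLt
  show (if _ : (i : ℕ) < n - 2 then W n k 0 + W n k ((i : ℕ) + 1) + W n k (n - 1)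
      else if (i : ℕ) = n - 2 then W n k 0 else W n k 1) = W n (k + 1) (i : ℕ)
  unfold W
  split_ifs <;> first | rfl | decide | (exact (by assumption : False).elim) | (exfalso; omega)

set_option maxHeartbeats 1000000 in
lemma last_step {n : ℕ} (hn : 3 ≤ n) (hno : n % 2 = 1) :
    Lmap n hn (w n (n - 1)) = w n (n - 1) + w n 1 + w n 0 := by
  funext i
  have hi := i.isLt
  show (if _ : (i : ℕ) < n - 2 then
        W n (n - 1) 0 + W n (n - 1) ((i : ℕ) + 1) + W n (n - 1) (n - 1)
      else if (i : ℕ) = n - 2 then W n (n - 1) 0 else W n (n - 1) 1)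
    = W n (n - 1) (i : ℕ) + W n 1 (i : ℕ) + W n 0 (i : ℕ)
  unfold W
  split_ifs <;> first | rfl | decide | (exact (by assumption : False).elim) | (exfalso; omega)

lemma pow_apply {n : ℕ} (hn : 3 ≤ n) {k : ℕ} (hk : k ≤ n - 1) :
    (Lmap n hn ^ k) (w n 0) = w n k := by
  induction k with
  | zero => rfl
  | succ m ih =>
      rw [pow_succ', Module.End.mul_apply, ih (by omega), step hn (by omega)]

set_option maxHeartbeats 1000000 in
lemma jump {n : ℕ} (hn : 3 ≤ n) {k i : ℕ} (hk : k < n) (hi1 : 1 ≤ i) (hi2 : i + 1 < n) :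
    W n k i + W n k (i + 1) = if i + k = n - 1 then 1 else 0 := by
  unfold W
  split_ifs <;> first | rfl | decide | (exact (by assumption : False).elim) | (exfalso; omega)

lemma indep {n : ℕ} (hn : 3 ≤ n) (hno : n % 2 = 1) :
    LinearIndependent (ZMod 2) (fun k : Fin n => w n (k : ℕ)) := by
  rw [Fintype.linearIndependent_iff]
  intro g hg
  have hco : ∀ i : Fin n, (∑ k : Fin n, g k * W n (k : ℕ) (i : ℕ)) = 0 := by
    intro i
    have h := congrFun hg i
    simpa [w, Finset.sum_apply, smul_eq_mul] using h
  have h1 : ∀ k0 : Fin n, 1 ≤ (k0 : ℕ) → (k0 : ℕ) ≤ n - 2 → g k0 = 0 := by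
    intro k0 hk1 hk2
    have e1 : (∑ k : Fin n, g k * W n (k : ℕ) (n - 1 - (k0 : ℕ))) = 0 :=
      hco ⟨n - 1 - (k0 : ℕ), by omega⟩
    have e2 : (∑ k : Fin n, g k * W n (k : ℕ) (n - (k0 : ℕ))) = 0 :=
      hco ⟨n - (k0 : ℕ), by omega⟩
    have key : ∀ k : Fin n,
        g k * W n (k : ℕ) (n - 1 - (k0 : ℕ)) + g k * W n (k : ℕ) (n - (k0 : ℕ))
          = if k = k0 then g k else 0 := by
      intro k
      have h := jump hn (k := (k : ℕ)) (i := n - 1 - (k0 : ℕ)) k.isLt (by omega) (by omega)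
      rw [show n - 1 - (k0 : ℕ) + 1 = n - (k0 : ℕ) by omega] at h
      rw [← mul_add, h]
      by_cases hk : k = k0
      · subst hk
        rw [if_pos (by omega), if_pos rfl, mul_one]
      · have hne : ¬ (n - 1 - (k0 : ℕ) + (k : ℕ) = n - 1) := by
          intro heq; exact hk (Fin.ext (by omega))
        rw [if_neg hne, if_neg hk, mul_zero]
    have hsum : (∑ k : Fin n, (if k = k0 then g k else 0)) = 0 := by
      rw [← Finset.sum_congr rfl (fun k _ => key k), Finset.sum_add_distrib, e1, e2, add_zero]
    simpa using hsum
  have hWlast : ∀ k : Fin n, g k * W n (k : ℕ) (n - 1)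
      = if k = (⟨n - 1, by omega⟩ : Fin n) then g k else 0 := by
    intro k
    rcases Nat.eq_zero_or_pos (k : ℕ) with h0 | h0
    · rw [if_neg (by intro h; have hval : (k : ℕ) = n - 1 := congrArg Fin.val h; omega),
        show W n (k : ℕ) (n - 1) = 0 from by
          unfold W; rw [if_pos h0, if_neg (by omega)], mul_zero]
    · by_cases hk : (k : ℕ) = n - 1
      · rw [if_pos (Fin.ext (show (k : ℕ) = n - 1 from hk)), hk,
          show W n (n - 1) (n - 1) = 1 from by
            unfold W; split_ifs <;> first | rfl | (exfalso; omega), mul_one]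
      · rw [if_neg (by intro h; exact hk (congrArg Fin.val h)), h1 k h0 (by omega), zero_mul]
  have hgl : g ⟨n - 1, by omega⟩ = 0 := by
    have e : (∑ k : Fin n, g k * W n (k : ℕ) (n - 1)) = 0 := hco ⟨n - 1, by omega⟩
    rw [Finset.sum_congr rfl (fun k _ => hWlast k), Finset.sum_ite_eq'] at e
    simpa using e
  have hWzero : ∀ k : Fin n, g k * W n (k : ℕ) 0
      = if k = (⟨0, by omega⟩ : Fin n) then g k else 0 := by
    intro k
    rcases Nat.eq_zero_or_pos (k : ℕ) with h0 | h0
    · rw [if_pos (Fin.ext (show (k : ℕ) = 0 from h0)),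
        show W n (k : ℕ) 0 = 1 from by unfold W; rw [if_pos h0, if_pos rfl], mul_one]
    · by_cases hk : (k : ℕ) = n - 1
      · rw [if_neg (by intro h; have hval : (k : ℕ) = 0 := congrArg Fin.val h; omega),
          show g k = 0 from by
            rw [show k = (⟨n - 1, by omega⟩ : Fin n) from Fin.ext hk]; exact hgl,
          zero_mul]
      · rw [if_neg (by intro h; have hval : (k : ℕ) = 0 := congrArg Fin.val h; omega),
          h1 k h0 (by omega), zero_mul]
  have hg0 : g ⟨0, by omega⟩ = 0 := by
    have e : (∑ k : Fin n, g k * W n (k : ℕ) 0) = 0 := hco ⟨0, by omega⟩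
    rw [Finset.sum_congr rfl (fun k _ => hWzero k), Finset.sum_ite_eq'] at e
    simpa using e
  intro k
  rcases Nat.eq_zero_or_pos (k : ℕ) with h0 | h0
  · rw [show k = (⟨0, by omega⟩ : Fin n) from Fin.ext h0]; exact hg0
  · by_cases hk : (k : ℕ) = n - 1
    · rw [show k = (⟨n - 1, by omega⟩ : Fin n) from Fin.ext hk]; exact hgl
    · exact h1 k h0 (by have := k.isLt; omega)

lemma span_w {n : ℕ} (hn : 3 ≤ n) (hno : n % 2 = 1) (x : Fin n → ZMod 2) :
    ∃ c : Fin n → ZMod 2, x = ∑ k : Fin n, c k • w n (k : ℕ) := by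
  haveI : NeZero n := ⟨by omega⟩
  set b := basisOfLinearIndependentOfCardEqFinrank (indep hn hno)
    (by simp [Module.finrank_fintype_fun_eq_card]) with hbdef
  refine ⟨fun k => b.repr x k, ?_⟩
  conv_lhs => rw [← b.sum_repr x]
  refine Finset.sum_congr rfl fun k _ => ?_
  rw [hbdef, coe_basisOfLinearIndependentOfCardEqFinrank]

end Stmt7Aux

open Stmt7Aux in
/-- For odd `n ≥ 3`, the minimal polynomial of `L_n` equals its characteristic
polynomial, namely `(x+1)(x^{n−1} − 1)`; equivalently `L_n` is cyclic, with the
single invariant factor `(x+1)(x^{n−1} − 1)`. -/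
theorem stmt7 (n : ℕ) (hn : 3 ≤ n) (hno : Odd n) :
    minpoly (ZMod 2) (Lmap n hn) = (X + 1) * (X ^ (n - 1) - 1) ∧
    minpoly (ZMod 2) (Lmap n hn) = LinearMap.charpoly (Lmap n hn) ∧
    Nonempty (Module.AEval' (Lmap n hn) ≃ₗ[Polynomial (ZMod 2)]
      Polynomial (ZMod 2) ⧸ Ideal.span
        {((X + 1) * (X ^ (n - 1) - 1) : Polynomial (ZMod 2))}) := by
  have hno' : n % 2 = 1 := Nat.odd_iff.mp hno
  have h2 : (1 + 1 : (ZMod 2)[X]) = 0 := by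
    rw [← C_1, ← C_add, show (1 + 1 : ZMod 2) = 0 from rfl, C_0]
  have key : ∀ m : ℕ, ((X : (ZMod 2)[X]) + 1) * (X ^ m - 1) = X ^ (m + 1) + X ^ m + X + 1 := by
    intro m
    linear_combination (-(X : (ZMod 2)[X]) - 1) * h2
  have hpe : ((X : (ZMod 2)[X]) + 1) * (X ^ (n - 1) - 1) = X ^ n + X ^ (n - 1) + X + 1 := by
    rw [key (n - 1), show n - 1 + 1 = n by omega]
  have hm1 : ((X : (ZMod 2)[X]) + 1).Monic := by simpa using monic_X_add_C (1 : ZMod 2)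
  have hm2 : ((X : (ZMod 2)[X]) ^ (n - 1) - 1).Monic := by
    simpa using monic_X_pow_sub_C (1 : ZMod 2) (show n - 1 ≠ 0 by omega)
  have hpmonic : (((X : (ZMod 2)[X]) + 1) * (X ^ (n - 1) - 1)).Monic := hm1.mul hm2
  have hpdeg : (((X : (ZMod 2)[X]) + 1) * (X ^ (n - 1) - 1)).natDegree = n := by
    rw [natDegree_mul hm1.ne_zero hm2.ne_zero]
    have e1 : ((X : (ZMod 2)[X]) + 1).natDegree = 1 := by
      simpa using natDegree_X_add_C (1 : ZMod 2)
    have e2 : ((X : (ZMod 2)[X]) ^ (n - 1) - 1).natDegree = n - 1 := by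
      simpa using natDegree_X_pow_sub_C (R := ZMod 2) (n := n - 1) (r := 1)
    rw [e1, e2]; omega
  have hself : ∀ x : Fin n → ZMod 2, x + x = 0 := by
    intro x; funext i
    have h : ∀ a : ZMod 2, a + a = 0 := by decide
    exact h (x i)
  have hpv : (aeval (Lmap n hn) (((X : (ZMod 2)[X]) + 1) * (X ^ (n - 1) - 1))) (w n 0) = 0 := by
    rw [hpe]
    simp only [map_add, map_one, aeval_X_pow, aeval_X, LinearMap.add_apply,
      Module.End.one_apply]
    have hLn : Lmap n hn ^ n = Lmap n hn * Lmap n hn ^ (n - 1) := by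
      have h := pow_succ' (Lmap n hn) (n - 1)
      rw [show n - 1 + 1 = n by omega] at h
      exact h
    rw [hLn, Module.End.mul_apply, pow_apply hn (le_refl _), last_step hn hno',
      step hn (show 0 + 1 ≤ n - 1 by omega)]
    calc w n (n-1) + w n 1 + w n 0 + w n (n-1) + w n (0+1) + w n 0
        = (w n (n-1) + w n (n-1)) + ((w n 1 + w n (0+1)) + (w n 0 + w n 0)) := by abel
      _ = 0 := by rw [hself, hself, hself]; simp
  have hcomm : ∀ (f : (ZMod 2)[X]) (k : ℕ),
      aeval (Lmap n hn) f * Lmap n hn ^ k = Lmap n hn ^ k * aeval (Lmap n hn) f := by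
    intro f k
    calc aeval (Lmap n hn) f * Lmap n hn ^ k
        = aeval (Lmap n hn) (f * X ^ k) := by rw [map_mul, aeval_X_pow]
      _ = aeval (Lmap n hn) (X ^ k * f) := by rw [mul_comm]
      _ = Lmap n hn ^ k * aeval (Lmap n hn) f := by rw [map_mul, aeval_X_pow]
  have hpw : ∀ k : Fin n,
      (aeval (Lmap n hn) (((X : (ZMod 2)[X]) + 1) * (X ^ (n - 1) - 1))) (w n (k : ℕ)) = 0 := by
    intro k
    rw [← pow_apply hn (show (k : ℕ) ≤ n - 1 by have := k.isLt; omega),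
      ← Module.End.mul_apply, hcomm, Module.End.mul_apply, hpv, map_zero]
  have hp0 : aeval (Lmap n hn) (((X : (ZMod 2)[X]) + 1) * (X ^ (n - 1) - 1)) = 0 := by
    apply LinearMap.ext
    intro x
    obtain ⟨c, hc⟩ := span_w hn hno' x
    rw [hc, map_sum, LinearMap.zero_apply]
    refine Finset.sum_eq_zero fun k _ => ?_
    rw [map_smul, hpw k, smul_zero]
  have hann : ∀ r : (ZMod 2)[X], r.natDegree < n →
      (aeval (Lmap n hn) r) (w n 0) = 0 → r = 0 := by
    intro r hr hrv
    have hs : (aeval (Lmap n hn) r) (w n 0) = ∑ k : Fin n, r.coeff (k : ℕ) • w n (k : ℕ) := by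
      rw [aeval_eq_sum_range' hr, Fin.sum_univ_eq_sum_range
        (fun k => r.coeff k • w n k) n, LinearMap.sum_apply]
      refine Finset.sum_congr rfl fun k hk => ?_
      rw [LinearMap.smul_apply, pow_apply hn (by
        have := Finset.mem_range.mp hk; omega)]
    have hz : ∀ k : Fin n, r.coeff (k : ℕ) = 0 :=
      Fintype.linearIndependent_iff.mp (indep hn hno') _ (by rw [← hs, hrv])
    ext j
    rcases lt_or_ge j n with hj | hj
    · simpa using hz ⟨j, hj⟩
    · simp [coeff_eq_zero_of_natDegree_lt (lt_of_lt_of_le hr hj)]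
  have hint : IsIntegral (ZMod 2) (Lmap n hn) :=
    ⟨(Lmap n hn).charpoly, (Lmap n hn).charpoly_monic, by
      simpa [aeval_def] using (Lmap n hn).aeval_self_charpoly⟩
  have hdeg_min : n ≤ (minpoly (ZMod 2) (Lmap n hn)).natDegree := by
    by_contra hlt
    push_neg at hlt
    have h0 : minpoly (ZMod 2) (Lmap n hn) = 0 := hann _ hlt (by rw [minpoly.aeval]; rfl)
    exact minpoly.ne_zero hint h0
  have hqp : minpoly (ZMod 2) (Lmap n hn) ∣ ((X : (ZMod 2)[X]) + 1) * (X ^ (n - 1) - 1) :=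
    minpoly.dvd _ _ hp0
  have hmin_eq : minpoly (ZMod 2) (Lmap n hn) = ((X : (ZMod 2)[X]) + 1) * (X ^ (n - 1) - 1) :=
    (eq_of_monic_of_dvd_of_natDegree_le (minpoly.monic hint) hpmonic hqp
      (by rw [hpdeg]; exact hdeg_min)).symm
  have hcdeg : (LinearMap.charpoly (Lmap n hn)).natDegree = n := by
    rw [LinearMap.charpoly_natDegree]
    simp [Module.finrank_fintype_fun_eq_card]
  have hchar_eq : minpoly (ZMod 2) (Lmap n hn) = LinearMap.charpoly (Lmap n hn) :=
    (eq_of_monic_of_dvd_of_natDegree_le (minpoly.monic hint) ((Lmap n hn).charpoly_monic)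
      (minpoly.dvd _ _ ((Lmap n hn).aeval_self_charpoly))
      (by rw [hcdeg]; exact hdeg_min)).symm
  refine ⟨hmin_eq, hchar_eq, ?_⟩
  -- the cyclic structure
  have hφ : ∀ f : (ZMod 2)[X],
      LinearMap.toSpanSingleton ((ZMod 2)[X]) (Module.AEval' (Lmap n hn))
        (Module.AEval'.of (Lmap n hn) (w n 0)) f
      = Module.AEval'.of (Lmap n hn) ((aeval (Lmap n hn) f) (w n 0)) := by
    intro f
    rw [LinearMap.toSpanSingleton_apply, ← Module.AEval.of_aeval_smul]
    rfl
  have hker : Ideal.span {((X : (ZMod 2)[X]) + 1) * (X ^ (n - 1) - 1)} ≤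
      LinearMap.ker (LinearMap.toSpanSingleton ((ZMod 2)[X]) (Module.AEval' (Lmap n hn))
        (Module.AEval'.of (Lmap n hn) (w n 0))) := by
    rw [Ideal.span_le, Set.singleton_subset_iff]
    show LinearMap.toSpanSingleton _ _ _ _ = 0
    rw [hφ, hp0]
    simp
  set ψ : ((ZMod 2)[X] ⧸ Ideal.span {((X : (ZMod 2)[X]) + 1) * (X ^ (n - 1) - 1)})
      →ₗ[(ZMod 2)[X]] Module.AEval' (Lmap n hn) :=
    Submodule.liftQ (Ideal.span {((X : (ZMod 2)[X]) + 1) * (X ^ (n - 1) - 1)})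
      (LinearMap.toSpanSingleton ((ZMod 2)[X]) (Module.AEval' (Lmap n hn))
        (Module.AEval'.of (Lmap n hn) (w n 0))) hker with hψdef
  have hsurj : Function.Surjective ψ := by
    intro x
    obtain ⟨c, hc⟩ := span_w hn hno' ((Module.AEval'.of (Lmap n hn)).symm x)
    refine ⟨Submodule.Quotient.mk (∑ k : Fin n, c k • (X : (ZMod 2)[X]) ^ (k : ℕ)), ?_⟩
    rw [hψdef, Submodule.liftQ_apply, hφ]
    have he : (aeval (Lmap n hn) (∑ k : Fin n, c k • (X : (ZMod 2)[X]) ^ (k : ℕ))) (w n 0)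
        = ∑ k : Fin n, c k • w n (k : ℕ) := by
      rw [map_sum, LinearMap.sum_apply]
      refine Finset.sum_congr rfl fun k _ => ?_
      rw [map_smul, aeval_X_pow, LinearMap.smul_apply,
        pow_apply hn (by have := k.isLt; omega)]
    rw [he, ← hc, LinearEquiv.apply_symm_apply]
  have hinj : Function.Injective ψ := by
    rw [← LinearMap.ker_eq_bot]
    apply Submodule.ker_liftQ_eq_bot
    intro q hq
    have hq0 : (aeval (Lmap n hn) q) (w n 0) = 0 := by
      have h := LinearMap.mem_ker.mp hq
      rw [hφ] at h
      exact (Module.AEval'.of (Lmap n hn)).injective (by rw [h]; simp)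
    have hp1 : ((X : (ZMod 2)[X]) + 1) * (X ^ (n - 1) - 1) ≠ 1 := by
      intro h
      rw [h, natDegree_one] at hpdeg
      omega
    have hrdeg : (q %ₘ (((X : (ZMod 2)[X]) + 1) * (X ^ (n - 1) - 1))).natDegree < n := by
      exact lt_of_lt_of_eq (natDegree_modByMonic_lt q hpmonic hp1) hpdeg
    have hdecomp : q %ₘ (((X : (ZMod 2)[X]) + 1) * (X ^ (n - 1) - 1))
        + (((X : (ZMod 2)[X]) + 1) * (X ^ (n - 1) - 1))
          * (q /ₘ (((X : (ZMod 2)[X]) + 1) * (X ^ (n - 1) - 1))) = q :=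
      modByMonic_add_div q _
    have hr0 : (aeval (Lmap n hn) (q %ₘ (((X : (ZMod 2)[X]) + 1) * (X ^ (n - 1) - 1))))
        (w n 0) = 0 := by
      have he : aeval (Lmap n hn) (q %ₘ (((X : (ZMod 2)[X]) + 1) * (X ^ (n - 1) - 1)))
          = aeval (Lmap n hn) q := by
        conv_rhs => rw [← hdecomp]
        rw [map_add, map_mul, hp0, zero_mul, add_zero]
      rw [he, hq0]
    have hrz : q %ₘ (((X : (ZMod 2)[X]) + 1) * (X ^ (n - 1) - 1)) = 0 := hann _ hrdeg hr0
    have hdvd : (((X : (ZMod 2)[X]) + 1) * (X ^ (n - 1) - 1)) ∣ q :=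
      ⟨q /ₘ (((X : (ZMod 2)[X]) + 1) * (X ^ (n - 1) - 1)), by
        conv_lhs => rw [← hdecomp]
        rw [hrz, zero_add]⟩
    exact Ideal.mem_span_singleton.mpr hdvd
  exact ⟨(LinearEquiv.ofBijective ψ ⟨hinj, hsurj⟩).symm⟩
end

section
/- Let n ≥ 3 and let r be a positive integer such that (2n−2)/r is an odd integer. Then in 𝔽₂[x], gcd(x^r − 1, (x+1)(x^{n−1} − 1)) = (x+1)(x^{r/2} − 1). -/
open Polynomial

lemma unit_poly_zmod2 (p : Polynomial (ZMod 2)) (hp : IsUnit p) : p = 1 := by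
  obtain ⟨c, hc, hcp⟩ := Polynomial.isUnit_iff.mp hp
  have h1 : ∀ t : ZMod 2, t ≠ 0 → t = 1 := by decide
  rw [← hcp, h1 c hc.ne_zero, map_one]

/- If `n ≥ 3` and `r ∣ 2n−2` with `(2n−2)/r` odd, then in `𝔽₂[x]`,
`gcd(x^r − 1, (x+1)(x^{n−1} − 1)) = (x+1)(x^{r/2} − 1)`. -/
open scoped Classical in
theorem stmt10 (n : ℕ) (hn : 3 ≤ n) (r : ℕ) (hr : 0 < r)
    (hdvd : r ∣ 2 * n - 2) (hodd : Odd ((2 * n - 2) / r)) :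
    EuclideanDomain.gcd (X ^ r - 1 : Polynomial (ZMod 2))
        ((X + 1) * (X ^ (n - 1) - 1)) =
      (X + 1) * (X ^ (r / 2) - 1) := by
  set k := (2 * n - 2) / r with hk
  have hkr : r * k = 2 * n - 2 := Nat.mul_div_cancel' hdvd
  have h2r : 2 ∣ r := by
    rcases Nat.even_or_odd r with he | ho
    · exact he.two_dvd
    · exfalso
      have hodd2 : Odd (2 * n - 2) := hkr ▸ ho.mul hodd
      rw [Nat.odd_iff] at hodd2
      omega
  set s := r / 2 with hs
  have hr2 : r = 2 * s := by omega
  have hspos : 0 < s := by omega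
  have hm : s * k = n - 1 := by
    have h1 : 2 * (s * k) = 2 * (n - 1) := by
      have : 2 * (s * k) = r * k := by rw [hr2]; ring
      omega
    omega
  -- polynomials
  have h2 : (2 : Polynomial (ZMod 2)) = 0 := by
    have := CharP.cast_eq_zero (Polynomial (ZMod 2)) 2
    exact_mod_cast this
  have hX : (X - 1 : Polynomial (ZMod 2)) = X + 1 := by
    linear_combination -h2
  set a : Polynomial (ZMod 2) := ∑ i ∈ Finset.range s, X ^ i with hadef
  set b : Polynomial (ZMod 2) := ∑ i ∈ Finset.range k, (X ^ s) ^ i with hbdef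
  have ha : a * (X - 1) = X ^ s - 1 := geom_sum_mul X s
  have hb : b * (X ^ s - 1) = X ^ (n - 1) - 1 := by
    rw [hbdef, geom_sum_mul, ← pow_mul, hm]
  have hXr : (X : Polynomial (ZMod 2)) ^ r = (X ^ s) ^ 2 := by
    rw [hr2, mul_comm, pow_mul]
  set c : Polynomial (ZMod 2) := (X + 1) * (X ^ s - 1) with hcdef
  have hA : (X ^ r - 1 : Polynomial (ZMod 2)) = c * a := by
    have : c * a = (X ^ s - 1) * ((X - 1) * a) := by rw [hX]; ring
    rw [this, mul_comm (X - 1) a, ha, hXr]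
    linear_combination (X ^ s - 1) * h2
  have hB : ((X + 1) * (X ^ (n - 1) - 1) : Polynomial (ZMod 2)) = c * b := by
    rw [hcdef, ← hb]; ring
  -- coprimality of a and b
  have hk1 : ((k : ℕ) : Polynomial (ZMod 2)) = 1 := by
    have h1 : ((k : ℕ) : ZMod 2) = 1 := by
      have := Nat.odd_iff.mp hodd
      rw [← ZMod.natCast_mod, this, Nat.cast_one]
    rw [← map_natCast (Polynomial.C : ZMod 2 →+* Polynomial (ZMod 2)), h1, map_one]
  have hdb : (X ^ s - 1 : Polynomial (ZMod 2)) ∣ b - 1 := by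
    have hsum : b - ((k : ℕ) : Polynomial (ZMod 2)) =
        ∑ i ∈ Finset.range k, ((X ^ s) ^ i - 1) := by
      rw [Finset.sum_sub_distrib, Finset.sum_const, Finset.card_range,
        nsmul_eq_mul, mul_one]
    have hsum' : b - 1 = ∑ i ∈ Finset.range k, ((X ^ s) ^ i - 1) := by
      calc b - 1 = b - ((k : ℕ) : Polynomial (ZMod 2)) := by rw [hk1]
        _ = _ := hsum
    rw [hsum']
    refine Finset.dvd_sum fun i _ => ?_
    have := sub_dvd_pow_sub_pow (X ^ s : Polynomial (ZMod 2)) 1 i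
    simpa using this
  obtain ⟨q, hq⟩ := hdb
  have hcop1 : IsCoprime (X ^ s - 1 : Polynomial (ZMod 2)) b :=
    ⟨-q, 1, by linear_combination hq⟩
  have hcop : IsCoprime a b :=
    IsCoprime.of_isCoprime_of_dvd_left hcop1 ⟨X - 1, ha.symm⟩
  -- mutual divisibility
  set d := EuclideanDomain.gcd (X ^ r - 1 : Polynomial (ZMod 2))
      ((X + 1) * (X ^ (n - 1) - 1)) with hddef
  have hdl : d ∣ c * a := hA ▸ EuclideanDomain.gcd_dvd_left _ _
  have hdr : d ∣ c * b := hB ▸ EuclideanDomain.gcd_dvd_right _ _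
  have dvd2 : d ∣ c := by
    obtain ⟨u, v, huv⟩ := hcop
    have hc : c = u * (c * a) + v * (c * b) := by linear_combination -c * huv
    rw [hc]
    exact dvd_add (hdl.mul_left u) (hdr.mul_left v)
  have dvd1 : c ∣ d :=
    EuclideanDomain.dvd_gcd ⟨a, hA⟩ ⟨b, hB⟩
  obtain ⟨u, hu⟩ := associated_of_dvd_dvd dvd2 dvd1
  rw [unit_poly_zmod2 (u : Polynomial (ZMod 2)) u.isUnit, mul_one] at hu
  exact hu
end

section
/- Let n ≥ 3 be odd and let r be a positive integer such that (2n−2)/r is an odd integer. Then in 𝔽₂[x], gcd(x^r − 1, (x+1)²(x^{n−1} − 1)) = (x+1)²(x^{r/2} − 1). -/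
open Polynomial Finset

open scoped Classical in
theorem stmt11 (n : ℕ) (hn : 3 ≤ n) (hno : Odd n) (r : ℕ) (hr : 0 < r)
    (hdvd : r ∣ 2 * n - 2) (hodd : Odd ((2 * n - 2) / r)) :
    EuclideanDomain.gcd (X ^ r - 1 : Polynomial (ZMod 2))
        ((X + 1) ^ 2 * (X ^ (n - 1) - 1)) =
      (X + 1) ^ 2 * (X ^ (r / 2) - 1) := by
  -- Natural number arithmetic
  obtain ⟨k, hk⟩ := hdvd
  have hkodd : Odd k := by
    have hkk : (2 * n - 2) / r = k := by rw [hk, Nat.mul_div_cancel_left k hr]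
    rwa [hkk] at hodd
  obtain ⟨j, hj⟩ := hno
  obtain ⟨w, hw⟩ := hkodd
  have hj1 : 1 ≤ j := by omega
  have h4r : 4 ∣ r := by
    have h4 : (4 : ℕ) ∣ r * k := ⟨j, by omega⟩
    have hcop : Nat.Coprime 4 k := by
      have h2 : Nat.Coprime 2 k := Nat.coprime_two_left.mpr ⟨w, hw⟩
      simpa using Nat.Coprime.pow_left 2 h2
    exact hcop.dvd_of_dvd_mul_right h4
  obtain ⟨t, ht⟩ := h4r
  have ht1 : 1 ≤ t := by omega
  set s := r / 2 with hs
  have hs2 : s = 2 * t := by omega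
  set m := n - 1 with hmdef
  have hm : m = s * k := by
    have h1 : r * k = 4 * j := by omega
    have h2 : 4 * (t * k) = 4 * j := by rw [← h1, ht]; ring
    have h3 : t * k = j := by omega
    rw [hs2, mul_assoc, h3]; omega
  -- Polynomial identities
  have h2z : (2 : Polynomial (ZMod 2)) = 0 := CharTwo.two_eq_zero
  set c : Polynomial (ZMod 2) := ∑ i ∈ range t, X ^ i with hc
  set Φ : Polynomial (ZMod 2) := ∑ i ∈ range k, (X ^ s) ^ i with hΦ
  have hXt : (X : Polynomial (ZMod 2)) ^ t + 1 = (X + 1) * c := by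
    have h := geom_sum_mul (X : Polynomial (ZMod 2)) t
    rw [CharTwo.sub_eq_add, CharTwo.sub_eq_add] at h
    rw [← h]; ring
  have hsq : ∀ p q : Polynomial (ZMod 2), (p + q) ^ 2 = p ^ 2 + q ^ 2 := fun p q =>
    add_pow_char p q 2
  have hXs : (X : Polynomial (ZMod 2)) ^ s + 1 = (X + 1) ^ 2 * c ^ 2 := by
    have hts : t * 2 = s := by omega
    rw [← hts, pow_mul, ← one_pow 2, ← hsq, one_pow, hXt, mul_pow]
  have hA : (X : Polynomial (ZMod 2)) ^ r + 1 = (X ^ s + 1) ^ 2 := by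
    have hsr : s * 2 = r := by omega
    rw [hsq, one_pow, ← pow_mul, hsr]
  have hB : (X : Polynomial (ZMod 2)) ^ m + 1 = (X ^ s + 1) * Φ := by
    have h := geom_sum_mul ((X : Polynomial (ZMod 2)) ^ s) k
    rw [CharTwo.sub_eq_add, CharTwo.sub_eq_add, ← pow_mul, ← hm] at h
    rw [← h]; ring
  -- Φ ≡ 1 mod (X^s + 1)
  have hq1 : ((k : ℕ) : Polynomial (ZMod 2)) = 1 := by
    rw [hw]; push_cast; rw [h2z]; ring
  have hsum : ∑ i ∈ range k, ((X ^ s : Polynomial (ZMod 2)) ^ i + 1) = Φ + 1 := by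
    rw [Finset.sum_add_distrib, Finset.sum_const, card_range, nsmul_eq_mul, mul_one, hq1]
  have hdvdΦ : ((X : Polynomial (ZMod 2)) ^ s + 1) ∣ Φ + 1 := by
    rw [← hsum]
    apply Finset.dvd_sum
    intro i _
    have h := geom_sum_mul ((X : Polynomial (ZMod 2)) ^ s) i
    rw [CharTwo.sub_eq_add, CharTwo.sub_eq_add] at h
    exact ⟨∑ i' ∈ range i, ((X : Polynomial (ZMod 2)) ^ s) ^ i', by rw [← h]; ring⟩
  obtain ⟨d, hd⟩ := hdvdΦ
  -- The two divisibilities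
  have hGA : ((X + 1) ^ 2 * (X ^ s + 1) : Polynomial (ZMod 2)) ∣ X ^ r + 1 := by
    refine ⟨c ^ 2, ?_⟩
    rw [hA, hXs]; ring
  have hGB : ((X + 1) ^ 2 * (X ^ s + 1) : Polynomial (ZMod 2)) ∣
      (X + 1) ^ 2 * (X ^ m + 1) := ⟨Φ, by rw [hB]; ring⟩
  have hcomb : (d * (X + 1) ^ 2) * ((X : Polynomial (ZMod 2)) ^ r + 1) +
      1 * ((X + 1) ^ 2 * (X ^ m + 1)) = (X + 1) ^ 2 * (X ^ s + 1) := by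
    rw [hA, hB]
    linear_combination (-((X + 1) ^ 2 * ((X : Polynomial (ZMod 2)) ^ s + 1))) * hd +
      ((X + 1) ^ 2 * ((X : Polynomial (ZMod 2)) ^ s + 1) * Φ) * h2z
  have hgcd1 : ((X + 1) ^ 2 * (X ^ s + 1) : Polynomial (ZMod 2)) ∣
      EuclideanDomain.gcd ((X : Polynomial (ZMod 2)) ^ r + 1) ((X + 1) ^ 2 * (X ^ m + 1)) :=
    EuclideanDomain.dvd_gcd hGA hGB
  have hgcd2 : EuclideanDomain.gcd ((X : Polynomial (ZMod 2)) ^ r + 1)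
      ((X + 1) ^ 2 * (X ^ m + 1)) ∣ (X + 1) ^ 2 * (X ^ s + 1) := by
    rw [← hcomb]
    exact dvd_add ((EuclideanDomain.gcd_dvd_left _ _).mul_left _)
      ((EuclideanDomain.gcd_dvd_right _ _).mul_left _)
  have hassoc := associated_of_dvd_dvd hgcd2 hgcd1
  obtain ⟨u, hu⟩ := hassoc
  have hu1 : (u : Polynomial (ZMod 2)) = 1 := by
    obtain ⟨a, ha, hCa⟩ := Polynomial.isUnit_iff.mp u.isUnit
    have ha1 : a = 1 := by
      have hgen : ∀ b : ZMod 2, b ≠ 0 → b = 1 := by decide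
      exact hgen a ha.ne_zero
    rw [← hCa, ha1, map_one]
  have hufinal : EuclideanDomain.gcd ((X : Polynomial (ZMod 2)) ^ r + 1)
      ((X + 1) ^ 2 * (X ^ m + 1)) = (X + 1) ^ 2 * (X ^ s + 1) := by
    rw [← hu, hu1, mul_one]
  calc EuclideanDomain.gcd (X ^ r - 1 : Polynomial (ZMod 2))
        ((X + 1) ^ 2 * (X ^ m - 1))
      = EuclideanDomain.gcd ((X : Polynomial (ZMod 2)) ^ r + 1)
        ((X + 1) ^ 2 * (X ^ m + 1)) := by
        rw [CharTwo.sub_eq_add, CharTwo.sub_eq_add]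
    _ = (X + 1) ^ 2 * (X ^ s + 1) := hufinal
    _ = (X + 1) ^ 2 * (X ^ s - 1) := by rw [CharTwo.sub_eq_add]
end

section
/- Let n ≥ 3 be odd, r a positive integer with (2n−2)/r odd, and write n−1 = rs/2 with s odd. Then in 𝔽₂[x], the polynomials q₁(x) = (x^{r/2} − 1)/(x+1) and q₂(x) = (x^{n−1} − 1)/(x^{r/2} − 1) are relatively prime. -/
open Polynomial

/-- If `n ≥ 3` is odd, `r ∣ 2n−2` with `(2n−2)/r` odd, and `n−1 = rs/2` with `s` odd,
then `q₁(x) = (x^{r/2} − 1)/(x+1)` and `q₂(x) = (x^{n−1} − 1)/(x^{r/2} − 1)` are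
coprime in `𝔽₂[x]`. -/
theorem stmt12 (n : ℕ) (hn : 3 ≤ n) (hno : Odd n) (r : ℕ) (hr : 0 < r)
    (hdvd : r ∣ 2 * n - 2) (hodd : Odd ((2 * n - 2) / r))
    (s : ℕ) (hs : Odd s) (hns : 2 * (n - 1) = r * s) :
    IsCoprime ((X ^ (r / 2) - 1 : Polynomial (ZMod 2)) / (X + 1))
      ((X ^ (n - 1) - 1 : Polynomial (ZMod 2)) / (X ^ (r / 2) - 1)) := by
  -- r is even
  have hreven : 2 ∣ r := by
    rcases Nat.even_or_odd r with h | h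
    · exact h.two_dvd
    · exfalso
      have : Odd (r * s) := h.mul hs
      rw [← hns] at this
      exact (Nat.not_odd_iff_even.mpr (even_two_mul (n - 1))) this
  set m := r / 2 with hm
  have hrm : r = 2 * m := by omega
  have hm1 : 1 ≤ m := by omega
  have hms : m * s = n - 1 := by
    have h2 : r * s = 2 * (m * s) := by rw [hrm]; ring
    omega
  -- characteristic 2 fact
  have hchar : (X + 1 : Polynomial (ZMod 2)) = X - 1 := by
    have h1 : (-1 : Polynomial (ZMod 2)) = 1 := by
      calc (-1 : Polynomial (ZMod 2)) = Polynomial.C (-1 : ZMod 2) := by rw [Polynomial.C_neg, Polynomial.C_1]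
        _ = Polynomial.C 1 := congrArg Polynomial.C (by decide)
        _ = 1 := Polynomial.C_1
    rw [sub_eq_add_neg, h1]
  set A : Polynomial (ZMod 2) := X ^ m - 1 with hA
  set B : Polynomial (ZMod 2) := X ^ (n - 1) - 1 with hB
  have hAne : A ≠ 0 := by
    intro h
    have := congrArg (fun p => p.coeff m) h
    simp only [hA, Polynomial.coeff_sub, Polynomial.coeff_X_pow, Polynomial.coeff_one,
      Polynomial.coeff_zero, if_pos rfl, if_neg (by omega : ¬ m = 0)] at this
    norm_num at this
  have hX1ne : (X + 1 : Polynomial (ZMod 2)) ≠ 0 := by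
    intro h
    have := congrArg (fun p => p.coeff 1) h
    simp [Polynomial.coeff_one] at this
  -- divisibility
  have hdvd1 : (X + 1 : Polynomial (ZMod 2)) ∣ A := by
    rw [hchar, hA]
    simpa using sub_dvd_pow_sub_pow (X : Polynomial (ZMod 2)) 1 m
  have hdvd2 : A ∣ B := by
    rw [hA, hB, ← hms]
    simpa [pow_mul] using sub_dvd_pow_sub_pow ((X : Polynomial (ZMod 2)) ^ m) 1 s
  -- identify q₂ with the geometric sum
  have hq2 : B / A = ∑ i ∈ Finset.range s, (X ^ m : Polynomial (ZMod 2)) ^ i := by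
    have h1 : A * (B / A) = B := EuclideanDomain.mul_div_cancel' hAne hdvd2
    have h2 : A * (∑ i ∈ Finset.range s, (X ^ m : Polynomial (ZMod 2)) ^ i) = B := by
      rw [mul_comm, hA, geom_sum_mul, hB, ← pow_mul, hms]
    exact mul_left_cancel₀ hAne (h1.trans h2.symm)
  -- the natural number s maps to 1 in 𝔽₂[x]
  have hscast : ((s : ℕ) : Polynomial (ZMod 2)) = 1 := by
    have h2 : ((s : ℕ) : ZMod 2) = 1 := by
      have hs1 : s % 2 = 1 := Nat.odd_iff.mp hs
      rw [← ZMod.natCast_mod s 2, hs1, Nat.cast_one]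
    rw [← Polynomial.C_eq_natCast, h2, Polynomial.C_1]
  -- the geometric sum is ≡ 1 mod A
  obtain ⟨t, ht⟩ : A ∣ (∑ i ∈ Finset.range s, (X ^ m : Polynomial (ZMod 2)) ^ i) - 1 := by
    have hsum : (∑ i ∈ Finset.range s, (X ^ m : Polynomial (ZMod 2)) ^ i) - 1
        = ∑ i ∈ Finset.range s, ((X ^ m : Polynomial (ZMod 2)) ^ i - 1) := by
      rw [Finset.sum_sub_distrib, Finset.sum_const, Finset.card_range, nsmul_eq_mul, mul_one,
        hscast]
    rw [hsum]
    refine Finset.dvd_sum fun i _ => ?_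
    rw [hA]
    simpa using sub_dvd_pow_sub_pow ((X : Polynomial (ZMod 2)) ^ m) 1 i
  -- conclude coprimality
  have hq1 : (A / (X + 1)) * (X + 1) = A := by
    rw [mul_comm]; exact EuclideanDomain.mul_div_cancel' hX1ne hdvd1
  refine ⟨-t * (X + 1), 1, ?_⟩
  have hq2' : B / A = A * t + 1 := by rw [hq2]; linear_combination ht
  rw [hq2', one_mul]
  calc -t * (X + 1) * (A / (X + 1)) + (A * t + 1)
      = -t * ((A / (X + 1)) * (X + 1)) + (A * t + 1) := by ring
    _ = -t * A + (A * t + 1) := by rw [hq1]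
    _ = 1 := by ring
end

section
/- Let n ≥ 3 be even, let L_n : 𝔽₂ⁿ → 𝔽₂ⁿ be the linear map L_n(y₁,...,y_n) = (y₁+y₂+y_n, ..., y₁+y_{n−1}+y_n, y₁, y₂), and let r be a positive integer dividing n−1. Then the set of fixed points of L_n^r is an 𝔽₂-vector subspace of dimension r+1; in particular L_n^r has exactly 2^{r+1} fixed points. -/
open scoped BigOperators

lemma Lmap_apply_lt (n : ℕ) (hn : 3 ≤ n) (y : Fin n → ZMod 2) (i : ℕ) (hi : i < n - 2) :
    Lmap n hn y ⟨i, by omega⟩ =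
      y ⟨0, by omega⟩ + y ⟨i + 1, by omega⟩ + y ⟨n - 1, by omega⟩ := by
  simp [Lmap, hi]

lemma Lmap_apply_mid (n : ℕ) (hn : 3 ≤ n) (y : Fin n → ZMod 2) :
    Lmap n hn y ⟨n - 2, by omega⟩ = y ⟨0, by omega⟩ := by
  simp [Lmap]

lemma Lmap_apply_last (n : ℕ) (hn : 3 ≤ n) (y : Fin n → ZMod 2) :
    Lmap n hn y ⟨n - 1, by omega⟩ = y ⟨1, by omega⟩ := by
  have h1 : ¬ (n - 1 < n - 2) := by omega
  have h2 : ¬ (n - 1 = n - 2) := by omega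
  simp [Lmap, h1, h2]

lemma zcongr {n : ℕ} (z : Fin n → ZMod 2) {a b : ℕ} (ha : a < n) (hb : b < n)
    (h : a = b) : z ⟨a, ha⟩ = z ⟨b, hb⟩ := by subst h; rfl



lemma idx {n : ℕ} (a : ℕ) (h : 3 ≤ n) : a % (n - 1) < n :=
  lt_of_lt_of_le (Nat.mod_lt _ (by omega)) (by omega)

lemma Lpow_apply (n : ℕ) (hn : 3 ≤ n) (z : Fin n → ZMod 2)
    (hz : z ⟨n - 1, by omega⟩ = z ⟨0, by omega⟩) (k : ℕ) :
    ∀ (i : ℕ) (hi : i < n),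
      (Lmap n hn ^ k) z ⟨i, hi⟩ = z ⟨(i + k) % (n - 1), idx _ hn⟩ := by
  induction k with
  | zero =>
    intro i hi
    rw [pow_zero, Module.End.one_apply]
    by_cases h : i = n - 1
    · subst h
      rw [zcongr z (idx _ hn) (show 0 < n by omega)
        (by rw [Nat.add_zero, Nat.mod_self])]
      exact hz
    · exact zcongr z _ _ (by rw [Nat.add_zero, Nat.mod_eq_of_lt (by omega)])
  | succ k ih =>
    intro i hi
    rw [pow_succ', Module.End.mul_apply]
    have h2 : ∀ a b : ZMod 2, a + b + a = b := by decide
    have e0 : (Lmap n hn ^ k) z ⟨0, by omega⟩ = z ⟨k % (n - 1), idx _ hn⟩ :=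
      (ih 0 (by omega)).trans (zcongr z _ _ (by rw [Nat.zero_add]))
    rcases lt_trichotomy i (n - 2) with h | h | h
    · have e1 : (Lmap n hn ^ k) z ⟨i + 1, by omega⟩ = z ⟨(i + 1 + k) % (n - 1), idx _ hn⟩ :=
        ih (i + 1) (by omega)
      have e2 : (Lmap n hn ^ k) z ⟨n - 1, by omega⟩ = z ⟨k % (n - 1), idx _ hn⟩ :=
        (ih (n - 1) (by omega)).trans (zcongr z _ _ (Nat.add_mod_left _ _))
      rw [Lmap_apply_lt n hn _ i h, e0, e1, e2, h2]
      exact zcongr z _ _ (by rw [show i + 1 + k = i + (k + 1) by omega])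
    · subst h
      rw [show (⟨n - 2, hi⟩ : Fin n) = ⟨n - 2, by omega⟩ from rfl, Lmap_apply_mid n hn, e0]
      exact zcongr z _ _
        (by rw [show n - 2 + (k + 1) = (n - 1) + k by omega, Nat.add_mod_left])
    · have hi' : i = n - 1 := by omega
      subst hi'
      have e1 : (Lmap n hn ^ k) z ⟨1, by omega⟩ = z ⟨(1 + k) % (n - 1), idx _ hn⟩ :=
        ih 1 (by omega)
      rw [show (⟨n - 1, hi⟩ : Fin n) = ⟨n - 1, by omega⟩ from rfl, Lmap_apply_last n hn, e1]
      exact zcongr z _ _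
        (by rw [show n - 1 + (k + 1) = (n - 1) + (1 + k) by omega, Nat.add_mod_left])

lemma cast2 (a b : ℕ) (h : a % 2 = b % 2) : ((a : ℕ) : ZMod 2) = ((b : ℕ) : ZMod 2) := by
  rw [← ZMod.natCast_mod a 2, ← ZMod.natCast_mod b 2, h]

lemma Lmap_w (n : ℕ) (hn : 3 ≤ n) (hne : Even n) :
    Lmap n hn (fun i : Fin n => ((i : ℕ) : ZMod 2)) = fun i : Fin n => ((i : ℕ) : ZMod 2) := by
  obtain ⟨m, hm⟩ := hne
  have hone : ((n - 1 : ℕ) : ZMod 2) = 1 := by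
    rw [cast2 (n - 1) 1 (by omega)]; norm_num
  funext i
  obtain ⟨i, hi⟩ := i
  rcases lt_trichotomy i (n - 2) with h | h | h
  · rw [Lmap_apply_lt n hn _ i h]
    show ((0 : ℕ) : ZMod 2) + ((i + 1 : ℕ) : ZMod 2) + ((n - 1 : ℕ) : ZMod 2) = _
    rw [hone]
    push_cast
    ring_nf
    rw [show ((2 : ZMod 2)) = 0 from rfl]
    ring
  · subst h
    rw [show (⟨n - 2, hi⟩ : Fin n) = ⟨n - 2, by omega⟩ from rfl, Lmap_apply_mid n hn]
    exact cast2 0 (n - 2) (by omega)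
  · have h' : i = n - 1 := by omega
    subst h'
    rw [show (⟨n - 1, hi⟩ : Fin n) = ⟨n - 1, by omega⟩ from rfl, Lmap_apply_last n hn]
    exact cast2 1 (n - 1) (by omega)

lemma Lpow_w (n : ℕ) (hn : 3 ≤ n) (hne : Even n) (k : ℕ) :
    (Lmap n hn ^ k) (fun i : Fin n => ((i : ℕ) : ZMod 2)) = fun i : Fin n => ((i : ℕ) : ZMod 2) := by
  induction k with
  | zero => rw [pow_zero, Module.End.one_apply]
  | succ k ih => rw [pow_succ', Module.End.mul_apply, ih, Lmap_w n hn hne]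

def phi (n r : ℕ) (hr : 0 < r) : ((Fin r → ZMod 2) × ZMod 2) →ₗ[ZMod 2] (Fin n → ZMod 2) where
  toFun p := fun i => p.1 ⟨(i : ℕ) % r, Nat.mod_lt _ hr⟩ + ((i : ℕ) : ZMod 2) * p.2
  map_add' p q := by funext i; simp; ring
  map_smul' c p := by funext i; simp; ring

lemma cast_n1 (n : ℕ) (hn : 3 ≤ n) (hne : Even n) : ((n - 1 : ℕ) : ZMod 2) = 1 := by
  obtain ⟨m, hm⟩ := hne
  rw [cast2 (n - 1) 1 (by omega)]; norm_num

lemma phi_fixed (n : ℕ) (hn : 3 ≤ n) (hne : Even n) (r : ℕ) (hr : 0 < r) (hdvd : r ∣ n - 1)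
    (p : (Fin r → ZMod 2) × ZMod 2) :
    (Lmap n hn ^ r) (phi n r hr p) = phi n r hr p := by
  have h0 : (n - 1) % r = 0 := by
    obtain ⟨q, hq⟩ := hdvd; rw [hq]; exact Nat.mul_mod_right r q
  set z : Fin n → ZMod 2 := fun i => p.1 ⟨(i : ℕ) % r, Nat.mod_lt _ hr⟩ with hzdef
  have hsplit : phi n r hr p = z + p.2 • (fun i : Fin n => ((i : ℕ) : ZMod 2)) := by
    funext i; simp [phi, hzdef]; ring
  have hz : z ⟨n - 1, by omega⟩ = z ⟨0, by omega⟩ :=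
    zcongr p.1 (Nat.mod_lt _ hr) (Nat.mod_lt _ hr) (by rw [h0, Nat.zero_mod])
  have hzfix : (Lmap n hn ^ r) z = z := by
    funext i
    obtain ⟨i, hi⟩ := i
    rw [Lpow_apply n hn z hz r i hi]
    exact zcongr p.1 (Nat.mod_lt _ hr) (Nat.mod_lt _ hr)
      (by rw [Nat.mod_mod_of_dvd _ hdvd, Nat.add_mod_right])
  rw [hsplit, map_add, map_smul, hzfix, Lpow_w n hn hne r]

lemma ker_sub_range (n : ℕ) (hn : 3 ≤ n) (hne : Even n) (r : ℕ) (hr : 0 < r)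
    (hdvd : r ∣ n - 1) (y : Fin n → ZMod 2) (hy : (Lmap n hn ^ r) y = y) :
    ∃ p, phi n r hr p = y := by
  have hrn : r ≤ n - 1 := Nat.le_of_dvd (by omega) hdvd
  set c : ZMod 2 := y ⟨0, by omega⟩ + y ⟨n - 1, by omega⟩ with hc
  set z : Fin n → ZMod 2 := fun i => y i + c * ((i : ℕ) : ZMod 2) with hzdef
  have hz0 : z ⟨n - 1, by omega⟩ = z ⟨0, by omega⟩ := by
    show y _ + c * ((n - 1 : ℕ) : ZMod 2) = y _ + c * ((0 : ℕ) : ZMod 2)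
    rw [cast_n1 n hn hne, hc]
    exact (by decide : ∀ a b : ZMod 2, b + (a + b) * 1 = a + (a + b) * ((0 : ℕ) : ZMod 2)) _ _
  have hzfix : (Lmap n hn ^ r) z = z := by
    have hsp : z = y + c • (fun i : Fin n => ((i : ℕ) : ZMod 2)) := by
      funext i; simp [hzdef]
    rw [hsp, map_add, map_smul, hy, Lpow_w n hn hne r]
  have hstep : ∀ (i : ℕ) (hi : i < n), z ⟨i, hi⟩ = z ⟨(i + r) % (n - 1), idx _ hn⟩ := by
    intro i hi
    calc z ⟨i, hi⟩ = (Lmap n hn ^ r) z ⟨i, hi⟩ := by rw [hzfix]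
    _ = z ⟨(i + r) % (n - 1), idx _ hn⟩ := Lpow_apply n hn z hz0 r i hi
  have hmod : ∀ (i : ℕ) (hi : i < n), z ⟨i, hi⟩ = z ⟨i % r, by
      have := Nat.mod_lt i hr; omega⟩ := by
    intro i
    induction i using Nat.strong_induction_on with
    | _ i ih =>
      intro hi
      by_cases hir : i < r
      · exact zcongr z _ _ (Nat.mod_eq_of_lt hir).symm
      · push_neg at hir
        have hj : i - r < n := by omega
        have h2 : i - r + r = i := by omega
        have h1 : z ⟨i - r, hj⟩ = z ⟨(i - r + r) % (n - 1), idx _ hn⟩ := hstep _ hj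
        have key : z ⟨(i - r + r) % (n - 1), idx _ hn⟩ = z ⟨i, hi⟩ := by
          rcases eq_or_lt_of_le (show i ≤ n - 1 by omega) with he | hlt
          · have e1 : (i - r + r) % (n - 1) = 0 := by rw [h2, he, Nat.mod_self]
            rw [zcongr z (idx _ hn) (show 0 < n by omega) e1]
            rw [zcongr z hi (show n - 1 < n by omega) he]
            exact hz0.symm
          · exact zcongr z _ _ (by rw [h2, Nat.mod_eq_of_lt (by omega)])
        have main : z ⟨i, hi⟩ = z ⟨i - r, hj⟩ := (h1.trans key).symm
        rw [main, ih (i - r) (by omega) (by omega)]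
        refine zcongr z _ _ ?_
        conv_rhs => rw [← h2, Nat.add_mod_right]
  refine ⟨⟨fun j => z ⟨(j : ℕ), by omega⟩, c⟩, ?_⟩
  funext i
  obtain ⟨i, hi⟩ := i
  show z ⟨i % r, by have := Nat.mod_lt i hr; omega⟩ + ((i : ℕ) : ZMod 2) * c = y ⟨i, hi⟩
  rw [← hmod i hi]
  show (y ⟨i, hi⟩ + c * ((i : ℕ) : ZMod 2)) + ((i : ℕ) : ZMod 2) * c = y ⟨i, hi⟩
  exact (by decide : ∀ a b c : ZMod 2, (a + b * c) + c * b = a) _ _ _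

lemma phi_inj (n : ℕ) (hn : 3 ≤ n) (hne : Even n) (r : ℕ) (hr : 0 < r)
    (hdvd : r ∣ n - 1) : Function.Injective (phi n r hr) := by
  have hrn : r ≤ n - 1 := Nat.le_of_dvd (by omega) hdvd
  have h0 : (n - 1) % r = 0 := by
    obtain ⟨q, hq⟩ := hdvd; rw [hq]; exact Nat.mul_mod_right r q
  rw [injective_iff_map_eq_zero]
  intro p hp
  have h00 := congrFun hp ⟨0, by omega⟩
  simp only [phi, LinearMap.coe_mk, AddHom.coe_mk, Pi.zero_apply, Nat.cast_zero,
    zero_mul, add_zero] at h00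
  have ha0 : p.1 ⟨0, hr⟩ = 0 := by
    rw [← zcongr p.1 (Nat.mod_lt _ hr) hr (Nat.zero_mod r)]; exact h00
  have hn1 := congrFun hp ⟨n - 1, by omega⟩
  simp only [phi, LinearMap.coe_mk, AddHom.coe_mk, Pi.zero_apply] at hn1
  rw [cast_n1 n hn hne, one_mul, zcongr p.1 (Nat.mod_lt _ hr) hr (by rw [h0]), ha0,
    zero_add] at hn1
  have hfst : p.1 = 0 := by
    funext j
    have hj := congrFun hp ⟨(j : ℕ), by omega⟩
    simp only [phi, LinearMap.coe_mk, AddHom.coe_mk, Pi.zero_apply, hn1, mul_zero,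
      add_zero] at hj
    rw [← zcongr p.1 (Nat.mod_lt _ hr) j.isLt (Nat.mod_eq_of_lt j.isLt)]
    exact hj
  exact Prod.ext hfst hn1

/-- For even `n ≥ 3` and `r ∣ n−1`, the fixed points of `L_n^r` form an
`𝔽₂`-subspace of dimension `r+1`; in particular there are exactly `2^{r+1}` of them. -/
theorem stmt13 (n : ℕ) (hn : 3 ≤ n) (hne : Even n) (r : ℕ) (hr : 0 < r)
    (hdvd : r ∣ n - 1) :
    Module.finrank (ZMod 2) (LinearMap.ker (Lmap n hn ^ r - LinearMap.id)) = r + 1 ∧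
    Nat.card {v : Fin n → ZMod 2 | (Lmap n hn ^ r) v = v} = 2 ^ (r + 1) := by
  have hker : LinearMap.ker (Lmap n hn ^ r - LinearMap.id) = LinearMap.range (phi n r hr) := by
    ext y
    simp only [LinearMap.mem_ker, LinearMap.sub_apply, LinearMap.id_apply, sub_eq_zero,
      LinearMap.mem_range]
    constructor
    · exact ker_sub_range n hn hne r hr hdvd y
    · rintro ⟨p, rfl⟩; exact phi_fixed n hn hne r hr hdvd p
  have e : ((Fin r → ZMod 2) × ZMod 2) ≃ₗ[ZMod 2]
      LinearMap.ker (Lmap n hn ^ r - LinearMap.id) :=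
    (LinearEquiv.ofInjective (phi n r hr) (phi_inj n hn hne r hr hdvd)).trans
      (LinearEquiv.ofEq _ _ hker.symm)
  constructor
  · rw [← e.finrank_eq, Module.finrank_prod, Module.finrank_fintype_fun_eq_card,
      Module.finrank_self, Fintype.card_fin]
  · have hset : {v : Fin n → ZMod 2 | (Lmap n hn ^ r) v = v} =
        (LinearMap.ker (Lmap n hn ^ r - LinearMap.id) : Set (Fin n → ZMod 2)) := by
      ext v
      simp [LinearMap.mem_ker, sub_eq_zero]
    rw [hset]
    simp only [SetLike.coe_sort_coe]
    rw [← Nat.card_congr e.toEquiv]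
    simp [Nat.card_eq_fintype_card, pow_succ]
end
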